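/- arXiv:2011.04829 — 5 statements merged into one kernel-verified Lean document; each statement's English description precedes it below -/
import Mathlib

section
/- Let X be a real n×k matrix with singular value decomposition X = U D Vᵀ, where U is an n×k real matrix with UᵀU equal to the k×k identity, V is a k×k real orthogonal matrix, and D is the k×k diagonal matrix with diagonal entries λ₁,…,λ_k. Let y ∈ ℝⁿ, γ ∈ ℝ, and for σ₁ > 0, σ₂ > 0, β ∈ ℝᵏ define q(σ₁,σ₂,β) = σ₁^{−(k+1)} σ₂^{−n} exp( −γ (log σ₁)² − σ₂²/2 − ‖Xβ − y‖²/(2σ₂²) − ‖β‖²/(2σ₁²) ). Set w = VᵀXᵀy, a₂ᵢ = λᵢ²/(2σ₂²) + 1/(2σ₁²), a₁ᵢ = wᵢ/σ₂², and a₀ = −yᵀy/(2σ₂²). Then for all σ₁, σ₂ > 0, the Lebesgue integral ∫_{ℝᵏ} q(σ₁,σ₂,β) dβ equals q̃(σ₁,σ₂) := σ₁^{−(k+1)} σ₂^{−n} exp( −γ (log σ₁)² − σ₂²/2 + a₀ + ∑_{i=1}^{k} a₁ᵢ²/(4 a₂ᵢ) ) · (2π)^{k/2} · ∏_{i=1}^{k}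 (2 a₂ᵢ)^{−1/2}. -/
open Matrix MeasureTheory
set_option maxHeartbeats 1000000

lemma aux_gauss (a c : ℝ) (ha : 0 < a) :
    ∫ x : ℝ, Real.exp (-a * x ^ 2 + c * x)
      = Real.exp (c ^ 2 / (4 * a)) * Real.sqrt (Real.pi / a) := by
  have h : ∀ x : ℝ, -a * x ^ 2 + c * x = c ^ 2 / (4 * a) + -a * (x - c / (2 * a)) ^ 2 := by
    intro x; field_simp; ring
  simp_rw [h, Real.exp_add]
  rw [integral_const_mul,
    integral_sub_right_eq_self (fun x : ℝ => Real.exp (-a * x ^ 2)) (c / (2 * a)),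
    integral_gaussian]

lemma aux_dot {m p : ℕ} (A : Matrix (Fin m) (Fin p) ℝ) (x z : Fin p → ℝ) :
    A.mulVec x ⬝ᵥ A.mulVec z = (Aᵀ * A).mulVec x ⬝ᵥ z := by
  rw [Matrix.dotProduct_mulVec, ← Matrix.mulVec_transpose, Matrix.mulVec_mulVec]

lemma aux_sqrt (a : ℝ) (ha : 0 < a) :
    Real.sqrt (Real.pi / a) = Real.sqrt (2 * Real.pi) * (2 * a) ^ (-(1 / 2 : ℝ)) := by
  have h2a : (0:ℝ) < 2 * a := by positivity
  rw [Real.rpow_neg h2a.le, ← Real.sqrt_eq_rpow, ← div_eq_mul_inv,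
    ← Real.sqrt_div (by positivity), mul_div_mul_left _ _ (two_ne_zero)]

lemma aux_pow (kk : ℕ) : Real.sqrt (2 * Real.pi) ^ kk = (2 * Real.pi) ^ ((kk : ℝ) / 2) := by
  rw [Real.sqrt_eq_rpow, ← Real.rpow_natCast ((2 * Real.pi) ^ (1/2:ℝ)) kk,
    ← Real.rpow_mul (by positivity)]
  congr 1; ring

lemma aux_norm_sq {m : ℕ} (v : EuclideanSpace ℝ (Fin m)) :
    ‖v‖ ^ 2 = ∑ i, v i * v i := by
  rw [EuclideanSpace.norm_eq, Real.sq_sqrt (by positivity)]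
  exact Finset.sum_congr rfl fun i _ => by rw [Real.norm_eq_abs, sq_abs, sq]

/-- Theorem 290, marginalization of `β`:
`∫_{ℝᵏ} q(σ₁,σ₂,β) dβ = q̃(σ₁,σ₂)`. -/
theorem stmt5
    (n k : ℕ) (hn : 0 < n) (hk : 0 < k)
    (X U : Matrix (Fin n) (Fin k) ℝ)
    (V : Matrix (Fin k) (Fin k) ℝ)
    (lam : Fin k → ℝ)
    (hU : Uᵀ * U = 1)
    (hV₁ : Vᵀ * V = 1) (hV₂ : V * Vᵀ = 1)
    (hX : X = U * Matrix.diagonal lam * Vᵀ)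
    (y : EuclideanSpace ℝ (Fin n)) (γ : ℝ)
    (σ₁ σ₂ : ℝ) (hσ₁ : 0 < σ₁) (hσ₂ : 0 < σ₂)
    (w : Fin k → ℝ)
    (hw : w = Vᵀ.mulVec (Xᵀ.mulVec y))
    (a₂ a₁ : Fin k → ℝ) (a₀ : ℝ)
    (ha₂ : ∀ i, a₂ i = lam i ^ 2 / (2 * σ₂ ^ 2) + 1 / (2 * σ₁ ^ 2))
    (ha₁ : ∀ i, a₁ i = w i / σ₂ ^ 2)
    (ha₀ : a₀ = -(y ⬝ᵥ y) / (2 * σ₂ ^ 2)) :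
    (∫ β : EuclideanSpace ℝ (Fin k),
        σ₁ ^ (-((k : ℤ) + 1)) * σ₂ ^ (-(n : ℤ)) *
          Real.exp (-γ * Real.log σ₁ ^ 2 - σ₂ ^ 2 / 2
            - ‖(EuclideanSpace.equiv (Fin n) ℝ).symm (X.mulVec β) - y‖ ^ 2 / (2 * σ₂ ^ 2)
            - ‖β‖ ^ 2 / (2 * σ₁ ^ 2)))
      = σ₁ ^ (-((k : ℤ) + 1)) * σ₂ ^ (-(n : ℤ)) *
          Real.exp (-γ * Real.log σ₁ ^ 2 - σ₂ ^ 2 / 2 + a₀ + ∑ i, a₁ i ^ 2 / (4 * a₂ i)) *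
          (2 * Real.pi) ^ ((k : ℝ) / 2) *
          ∏ i, (2 * a₂ i) ^ (-(1 / 2 : ℝ)) := by
  have hσ₁' : σ₁ ≠ 0 := hσ₁.ne'
  have hσ₂' : σ₂ ≠ 0 := hσ₂.ne'
  have ha₂pos : ∀ i, 0 < a₂ i := fun i => by rw [ha₂ i]; positivity
  set c : ℝ := σ₁ ^ (-((k : ℤ) + 1)) * σ₂ ^ (-(n : ℤ)) with hc
  set C : ℝ := -γ * Real.log σ₁ ^ 2 - σ₂ ^ 2 / 2 with hC
  -- matrix facts
  have hXV : X * V = U * Matrix.diagonal lam := by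
    rw [hX, Matrix.mul_assoc, hV₁, Matrix.mul_one]
  have hw' : w = (U * Matrix.diagonal lam)ᵀ.mulVec (fun i => y i) := by
    rw [hw, Matrix.mulVec_mulVec, ← Matrix.transpose_mul, hXV]
  have hAtA : (U * Matrix.diagonal lam)ᵀ * (U * Matrix.diagonal lam)
      = Matrix.diagonal (fun i => lam i * lam i) := by
    rw [Matrix.transpose_mul, Matrix.diagonal_transpose, Matrix.mul_assoc,
      ← Matrix.mul_assoc Uᵀ U, hU, Matrix.one_mul, Matrix.diagonal_mul_diagonal]
  -- measure-preserving maps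
  have hdet : Matrix.det V * Matrix.det V = 1 := by
    have h := congrArg Matrix.det hV₁
    rwa [Matrix.det_mul, Matrix.det_transpose, Matrix.det_one] at h
  have hdetne : Matrix.det V ≠ 0 := by
    intro h; rw [h, mul_zero] at hdet; exact zero_ne_one hdet
  have habs : |Matrix.det V| = 1 := by
    nlinarith [abs_nonneg (Matrix.det V), abs_mul_abs_self (Matrix.det V)]
  have hmp : MeasurePreserving (Matrix.toLin' V) (volume : Measure (Fin k → ℝ)) volume := by
    refine ⟨(LinearMap.continuous_on_pi _).measurable, ?_⟩
    rw [Real.map_matrix_volume_pi_eq_smul_volume_pi hdetne, abs_inv, habs]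
    simp
  have hemb : MeasurableEmbedding (Matrix.toLin' V) := by
    let e : (Fin k → ℝ) ≃ₗ[ℝ] (Fin k → ℝ) :=
      LinearEquiv.ofLinear (Matrix.toLin' V) (Matrix.toLin' Vᵀ)
        (by rw [← Matrix.toLin'_mul, hV₂, Matrix.toLin'_one])
        (by rw [← Matrix.toLin'_mul, hV₁, Matrix.toLin'_one])
    exact e.toContinuousLinearEquiv.toHomeomorph.measurableEmbedding
  set g : EuclideanSpace ℝ (Fin k) → ℝ := fun β =>
    c * Real.exp (C
      - ‖(EuclideanSpace.equiv (Fin n) ℝ).symm (X.mulVec β) - y‖ ^ 2 / (2 * σ₂ ^ 2)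
      - ‖β‖ ^ 2 / (2 * σ₁ ^ 2)) with hg
  calc (∫ β : EuclideanSpace ℝ (Fin k), g β)
      = ∫ x : Fin k → ℝ, g ((MeasurableEquiv.toLp 2 (Fin k → ℝ)) x) :=
        (((EuclideanSpace.volume_preserving_symm_measurableEquiv_toLp (Fin k)).symm).integral_comp' g).symm
    _ = ∫ α : Fin k → ℝ,
          g ((MeasurableEquiv.toLp 2 (Fin k → ℝ)) (Matrix.toLin' V α)) :=
        (hmp.integral_comp hemb
          (fun x => g ((MeasurableEquiv.toLp 2 (Fin k → ℝ)) x))).symm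
    _ = ∫ α : Fin k → ℝ,
          (c * Real.exp (C + a₀)) * ∏ i, Real.exp (-a₂ i * α i ^ 2 + a₁ i * α i) := by
        congr 1; funext α
        have hα : ((MeasurableEquiv.toLp 2 (Fin k → ℝ)) (Matrix.toLin' V α))
            = (EuclideanSpace.equiv (Fin k) ℝ).symm (V.mulVec α) := by
          simp [Matrix.toLin'_apply]
        rw [hα]
        simp only [hg]
        -- compute the two squared norms
        have hnorm1 : ‖(EuclideanSpace.equiv (Fin n) ℝ).symm
              (X.mulVec ((EuclideanSpace.equiv (Fin k) ℝ).symm (V.mulVec α))) - y‖ ^ 2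
            = (X.mulVec (V.mulVec α)) ⬝ᵥ (X.mulVec (V.mulVec α))
              - 2 * ((X.mulVec (V.mulVec α)) ⬝ᵥ (fun i => y i)) + (y ⬝ᵥ y) := by
          rw [aux_norm_sq]
          simp only [dotProduct, Finset.mul_sum, ← Finset.sum_sub_distrib,
            ← Finset.sum_add_distrib]
          exact Finset.sum_congr rfl fun i _ => by
            show (X.mulVec (V.mulVec α) i - y i) * (X.mulVec (V.mulVec α) i - y i) = _
            ring
        have hnorm2 : ‖(EuclideanSpace.equiv (Fin k) ℝ).symm (V.mulVec α)‖ ^ 2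
            = (V.mulVec α) ⬝ᵥ (V.mulVec α) := by
          rw [aux_norm_sq]; rfl
        have h1 : (X.mulVec (V.mulVec α)) ⬝ᵥ (X.mulVec (V.mulVec α))
            = ∑ i, lam i ^ 2 * α i ^ 2 := by
          rw [Matrix.mulVec_mulVec, hXV, aux_dot, hAtA]
          simp only [dotProduct, Matrix.mulVec_diagonal]
          exact Finset.sum_congr rfl fun i _ => by ring
        have h2 : (X.mulVec (V.mulVec α)) ⬝ᵥ (fun i => y i) = ∑ i, w i * α i := by
          rw [Matrix.mulVec_mulVec, hXV, dotProduct_comm, Matrix.dotProduct_mulVec,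
            ← Matrix.mulVec_transpose, ← hw']
          rfl
        have h3 : (V.mulVec α) ⬝ᵥ (V.mulVec α) = ∑ i, α i ^ 2 := by
          rw [aux_dot, hV₁, Matrix.one_mulVec]
          simp only [dotProduct]
          exact Finset.sum_congr rfl fun i _ => by ring
        rw [hnorm1, hnorm2, h1, h2, h3, ← Real.exp_sum]
        conv_rhs => rw [mul_assoc, ← Real.exp_add]
        congr 2
        have hT : ∑ i, (-a₂ i * α i ^ 2 + a₁ i * α i)
            = (-(∑ i, lam i ^ 2 * α i ^ 2)) / (2 * σ₂ ^ 2)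
              + (-(∑ i, α i ^ 2)) / (2 * σ₁ ^ 2) + (∑ i, w i * α i) / σ₂ ^ 2 := by
          rw [Finset.sum_congr rfl (fun i (_ : i ∈ Finset.univ) =>
            show -a₂ i * α i ^ 2 + a₁ i * α i
              = (-(lam i ^ 2 * α i ^ 2)) / (2 * σ₂ ^ 2) + (-(α i ^ 2)) / (2 * σ₁ ^ 2)
                + (w i * α i) / σ₂ ^ 2 by
              rw [ha₂ i, ha₁ i]; field_simp; ring)]
          rw [Finset.sum_add_distrib, Finset.sum_add_distrib, ← Finset.sum_div,
            ← Finset.sum_div, ← Finset.sum_div, Finset.sum_neg_distrib, Finset.sum_neg_distrib]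
        rw [hT, ha₀]
        field_simp
        ring
    _ = (c * Real.exp (C + a₀)) *
          ∏ i, ∫ x : ℝ, Real.exp (-a₂ i * x ^ 2 + a₁ i * x) := by
        rw [integral_const_mul,
          integral_fintype_prod_volume_eq_prod (ι := Fin k)
            (fun i (x : ℝ) => Real.exp (-a₂ i * x ^ 2 + a₁ i * x))]
    _ = _ := by
        have : ∀ i ∈ Finset.univ, (∫ x : ℝ, Real.exp (-a₂ i * x ^ 2 + a₁ i * x))
            = Real.exp (a₁ i ^ 2 / (4 * a₂ i))
              * (Real.sqrt (2 * Real.pi) * (2 * a₂ i) ^ (-(1 / 2 : ℝ))) := fun i _ => by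
          rw [aux_gauss (a₂ i) (a₁ i) (ha₂pos i), aux_sqrt (a₂ i) (ha₂pos i)]
        rw [Finset.prod_congr rfl this, Finset.prod_mul_distrib, Finset.prod_mul_distrib,
          ← Real.exp_sum, Finset.prod_const, Finset.card_univ, Fintype.card_fin, aux_pow]
        conv_rhs => rw [Real.exp_add]
        ring
end

section
/- Let X be a real n×k matrix with singular value decomposition X = U D Vᵀ, where U is an n×k real matrix with UᵀU equal to the k×k identity, V is a k×k real orthogonal matrix, and D is the k×k diagonal matrix with diagonal entries λ₁,…,λ_k. Let y ∈ ℝⁿ, γ ∈ ℝ, and for σ₁ > 0, σ₂ > 0, β ∈ ℝᵏ define q(σ₁,σ₂,β) = σ₁^{−(k+1)} σ₂^{−n} exp( −γ (log σ₁)² − σ₂²/2 − ‖Xβ − y‖²/(2σ₂²) − ‖β‖²/(2σ₁²) ). Set w = VᵀXᵀy, a₂ᵢ = λᵢ²/(2σ₂²) + 1/(2σ₁²), a₁ᵢ = wᵢ/σ₂², a₀ = −yᵀy/(2σ₂²), and q̃(σ₁,σ₂) = σ₁^{−(k+1)} σ₂^{−n} exp( −γ (log σ₁)² − σ₂²/2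 + a₀ + ∑_{i=1}^{k} a₁ᵢ²/(4 a₂ᵢ) ) · (2π)^{k/2} · ∏_{i=1}^{k} (2 a₂ᵢ)^{−1/2}. Then for all σ₁, σ₂ > 0 and every index i ∈ {1,…,k}, the Lebesgue integral ∫_{ℝᵏ} (Vᵀβ)ᵢ · q(σ₁,σ₂,β) dβ equals (a₁ᵢ/(2 a₂ᵢ)) · q̃(σ₁,σ₂). -/
open Matrix MeasureTheory

section aux

open Real

lemma stmt6aux_gauss0 {a : ℝ} (ha : 0 < a) (b : ℝ) :
    ∫ x : ℝ, Real.exp (-a * x ^ 2 + b * x) = Real.sqrt (π / a) * Real.exp (b ^ 2 / (4 * a)) := by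
  have h : ∀ x : ℝ, -a * x ^ 2 + b * x = -a * (x - b / (2 * a)) ^ 2 + b ^ 2 / (4 * a) := by
    intro x; field_simp; ring
  simp_rw [h, Real.exp_add, integral_mul_const]
  rw [integral_sub_right_eq_self (fun x : ℝ => Real.exp (-a * x ^ 2)) (b / (2 * a))]
  rw [integral_gaussian]

lemma stmt6aux_gauss_odd (a : ℝ) :
    ∫ x : ℝ, x * Real.exp (-a * x ^ 2) = 0 := by
  have h := integral_neg_eq_self (fun x : ℝ => x * Real.exp (-a * x ^ 2)) (volume : Measure ℝ)
  simp only [neg_mul, neg_sq] at h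
  have h2 : ∫ x : ℝ, -(x * Real.exp (-a * x ^ 2)) = ∫ x : ℝ, x * Real.exp (-a * x ^ 2) := by
    simpa using h
  rw [integral_neg] at h2
  linarith

lemma stmt6aux_gauss1 {a : ℝ} (ha : 0 < a) (b : ℝ) :
    ∫ x : ℝ, x * Real.exp (-a * x ^ 2 + b * x)
      = b / (2 * a) * (Real.sqrt (π / a) * Real.exp (b ^ 2 / (4 * a))) := by
  have h : ∀ x : ℝ, -a * x ^ 2 + b * x = -a * (x - b / (2 * a)) ^ 2 + b ^ 2 / (4 * a) := by
    intro x; field_simp; ring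
  simp_rw [h, Real.exp_add, ← mul_assoc, integral_mul_const]
  have h2 : ∫ x : ℝ, x * Real.exp (-a * (x - b / (2 * a)) ^ 2)
      = ∫ x : ℝ, (x + b / (2 * a)) * Real.exp (-a * x ^ 2) := by
    rw [← integral_sub_right_eq_self (fun x : ℝ => (x + b / (2 * a)) * Real.exp (-a * x ^ 2))
      (b / (2 * a))]
    simp
  rw [h2]
  have hint1 : Integrable (fun x : ℝ => x * Real.exp (-a * x ^ 2)) := by
    have := integrable_mul_exp_neg_mul_sq ha
    simpa using this
  have hint2 : Integrable (fun x : ℝ => b / (2 * a) * Real.exp (-a * x ^ 2)) :=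
    (integrable_exp_neg_mul_sq ha).const_mul _
  simp_rw [add_mul]
  rw [integral_add hint1 hint2, stmt6aux_gauss_odd a, integral_const_mul, integral_gaussian]
  ring

lemma stmt6aux_norm_sq {m : ℕ} (v : EuclideanSpace ℝ (Fin m)) : ‖v‖ ^ 2 = ∑ j, v j ^ 2 := by
  rw [EuclideanSpace.norm_eq, Real.sq_sqrt (by positivity)]
  simp [Real.norm_eq_abs, sq_abs]

lemma stmt6aux_sum_sq {m : ℕ} (v : Fin m → ℝ) : ∑ j, v j ^ 2 = v ⬝ᵥ v := by
  simp [dotProduct, sq]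

end aux

/-- Theorem 380, first moment of `zᵢ = (Vᵀβ)ᵢ`:
`∫_{ℝᵏ} (Vᵀβ)ᵢ q(σ₁,σ₂,β) dβ = (a₁ᵢ/(2a₂ᵢ)) q̃(σ₁,σ₂)`. -/
theorem stmt6
    (n k : ℕ) (hn : 0 < n) (hk : 0 < k)
    (X U : Matrix (Fin n) (Fin k) ℝ)
    (V : Matrix (Fin k) (Fin k) ℝ)
    (lam : Fin k → ℝ)
    (hU : Uᵀ * U = 1)
    (hV₁ : Vᵀ * V = 1) (hV₂ : V * Vᵀ = 1)
    (hX : X = U * Matrix.diagonal lam * Vᵀ)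
    (y : EuclideanSpace ℝ (Fin n)) (γ : ℝ)
    (σ₁ σ₂ : ℝ) (hσ₁ : 0 < σ₁) (hσ₂ : 0 < σ₂)
    (w : Fin k → ℝ)
    (hw : w = Vᵀ.mulVec (Xᵀ.mulVec y))
    (a₂ a₁ : Fin k → ℝ) (a₀ : ℝ)
    (ha₂ : ∀ i, a₂ i = lam i ^ 2 / (2 * σ₂ ^ 2) + 1 / (2 * σ₁ ^ 2))
    (ha₁ : ∀ i, a₁ i = w i / σ₂ ^ 2)
    (ha₀ : a₀ = -(y ⬝ᵥ y) / (2 * σ₂ ^ 2))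
    (i : Fin k) :
    (∫ β : EuclideanSpace ℝ (Fin k),
        Vᵀ.mulVec β i *
          (σ₁ ^ (-((k : ℤ) + 1)) * σ₂ ^ (-(n : ℤ)) *
            Real.exp (-γ * Real.log σ₁ ^ 2 - σ₂ ^ 2 / 2
              - ‖(EuclideanSpace.equiv (Fin n) ℝ).symm (X.mulVec β) - y‖ ^ 2 / (2 * σ₂ ^ 2)
              - ‖β‖ ^ 2 / (2 * σ₁ ^ 2))))
      = a₁ i / (2 * a₂ i) *
          (σ₁ ^ (-((k : ℤ) + 1)) * σ₂ ^ (-(n : ℤ)) *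
            Real.exp (-γ * Real.log σ₁ ^ 2 - σ₂ ^ 2 / 2 + a₀ + ∑ j, a₁ j ^ 2 / (4 * a₂ j)) *
            (2 * Real.pi) ^ ((k : ℝ) / 2) *
            ∏ j, (2 * a₂ j) ^ (-(1 / 2 : ℝ))) := by
  have hσ₁' : σ₁ ≠ 0 := ne_of_gt hσ₁
  have hσ₂' : σ₂ ≠ 0 := ne_of_gt hσ₂
  have ha₂pos : ∀ j, 0 < a₂ j := by
    intro j; rw [ha₂]; positivity
  -- determinant facts
  have hdet : V.det * V.det = 1 := by
    have h := congrArg Matrix.det hV₁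
    rwa [Matrix.det_mul, Matrix.det_transpose, Matrix.det_one] at h
  have hdetne : V.det ≠ 0 := by
    intro h; rw [h, mul_zero] at hdet; exact zero_ne_one hdet
  have habs : |V.det| = 1 := by
    rcases mul_self_eq_one_iff.mp hdet with h | h <;> rw [h] <;> norm_num
  -- measure preservation of `z ↦ V.mulVec z`
  have hMP : MeasurePreserving (fun z : Fin k → ℝ => V.mulVec z) volume volume := by
    have hco : (fun z : Fin k → ℝ => V.mulVec z) = ⇑(Matrix.toLin' V) := by
      funext z; rw [Matrix.toLin'_apply]
    constructor
    · rw [hco]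
      exact (LinearMap.continuous_on_pi _).measurable
    · rw [hco, Real.map_matrix_volume_pi_eq_smul_volume_pi hdetne, abs_inv, habs]
      simp
  have hemb : MeasurableEmbedding (fun z : Fin k → ℝ => V.mulVec z) := by
    apply hMP.measurable.measurableEmbedding
    intro z₁ z₂ h
    have h2 := congrArg (fun v => Vᵀ.mulVec v) h
    simpa [Matrix.mulVec_mulVec, hV₁, Matrix.one_mulVec] using h2
  set C₀ : ℝ := σ₁ ^ (-((k : ℤ) + 1)) * σ₂ ^ (-(n : ℤ)) with hC₀
  set K : ℝ := -γ * Real.log σ₁ ^ 2 - σ₂ ^ 2 / 2 + a₀ with hK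
  set f : Fin k → ℝ → ℝ :=
    fun j t => (if j = i then t else 1) * Real.exp (-a₂ j * t ^ 2 + a₁ j * t) with hf
  -- pointwise identity
  have hM : X * V = U * Matrix.diagonal lam := by
    rw [hX, Matrix.mul_assoc, hV₁, Matrix.mul_one]
  have hMtM : (U * Matrix.diagonal lam)ᵀ * (U * Matrix.diagonal lam)
      = Matrix.diagonal (fun j => lam j * lam j) := by
    rw [Matrix.transpose_mul, Matrix.diagonal_transpose, Matrix.mul_assoc,
      ← Matrix.mul_assoc Uᵀ U, hU, Matrix.one_mul, Matrix.diagonal_mul_diagonal]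
  have hwM : w = (U * Matrix.diagonal lam)ᵀ.mulVec y := by
    rw [hw, Matrix.mulVec_mulVec, ← Matrix.transpose_mul, hM]
  have hpt : ∀ z : Fin k → ℝ,
      Vᵀ.mulVec ((MeasurableEquiv.toLp 2 (Fin k → ℝ)) (V.mulVec z)) i *
        (C₀ * Real.exp (-γ * Real.log σ₁ ^ 2 - σ₂ ^ 2 / 2
          - ‖(EuclideanSpace.equiv (Fin n) ℝ).symm
              (X.mulVec ((MeasurableEquiv.toLp 2 (Fin k → ℝ)) (V.mulVec z))) - y‖ ^ 2
              / (2 * σ₂ ^ 2)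
          - ‖(MeasurableEquiv.toLp 2 (Fin k → ℝ)) (V.mulVec z)‖ ^ 2 / (2 * σ₁ ^ 2)))
      = (C₀ * Real.exp K) * ∏ j, f j (z j) := by
    intro z
    have h1 : Vᵀ.mulVec ((MeasurableEquiv.toLp 2 (Fin k → ℝ)) (V.mulVec z)) i = z i := by
      show Vᵀ.mulVec (V.mulVec z) i = z i
      rw [Matrix.mulVec_mulVec, hV₁, Matrix.one_mulVec]
    have h2 : ‖(MeasurableEquiv.toLp 2 (Fin k → ℝ)) (V.mulVec z)‖ ^ 2
        = ∑ j, z j ^ 2 := by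
      rw [stmt6aux_norm_sq]
      show ∑ j, (V.mulVec z) j ^ 2 = ∑ j, z j ^ 2
      rw [stmt6aux_sum_sq, stmt6aux_sum_sq]
      calc (V *ᵥ z) ⬝ᵥ (V *ᵥ z) = ((V *ᵥ z) ᵥ* V) ⬝ᵥ z := Matrix.dotProduct_mulVec _ _ _
        _ = (Vᵀ *ᵥ (V *ᵥ z)) ⬝ᵥ z := by rw [Matrix.mulVec_transpose]
        _ = z ⬝ᵥ z := by rw [Matrix.mulVec_mulVec, hV₁, Matrix.one_mulVec]
    have h3 : ‖(EuclideanSpace.equiv (Fin n) ℝ).symm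
          (X.mulVec ((MeasurableEquiv.toLp 2 (Fin k → ℝ)) (V.mulVec z))) - y‖ ^ 2
        = (∑ j, lam j ^ 2 * z j ^ 2) - 2 * (∑ j, w j * z j) + y ⬝ᵥ y := by
      set M : Matrix (Fin n) (Fin k) ℝ := U * Matrix.diagonal lam with hMdef
      set y' : Fin n → ℝ := fun j => y j with hy'
      have hXz : X.mulVec ((MeasurableEquiv.toLp 2 (Fin k → ℝ)) (V.mulVec z))
          = M.mulVec z := by
        show X.mulVec (V.mulVec z) = M.mulVec z
        rw [Matrix.mulVec_mulVec, hM]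
      rw [hXz, stmt6aux_norm_sq]
      have hcoord : ∀ j, ((EuclideanSpace.equiv (Fin n) ℝ).symm (M.mulVec z) - y) j
          = M.mulVec z j - y' j := fun j => rfl
      simp_rw [hcoord]
      have hsub : ∑ j, (M.mulVec z j - y' j) ^ 2
          = (M.mulVec z - y') ⬝ᵥ (M.mulVec z - y') := by
        rw [← stmt6aux_sum_sq]; rfl
      rw [hsub, sub_dotProduct, dotProduct_sub, dotProduct_sub]
      have hpp : M.mulVec z ⬝ᵥ M.mulVec z = ∑ j, lam j ^ 2 * z j ^ 2 := by
        calc M.mulVec z ⬝ᵥ M.mulVec z = ((M *ᵥ z) ᵥ* M) ⬝ᵥ z := Matrix.dotProduct_mulVec _ _ _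
          _ = (Mᵀ *ᵥ (M *ᵥ z)) ⬝ᵥ z := by rw [Matrix.mulVec_transpose]
          _ = ((Matrix.diagonal fun j => lam j * lam j) *ᵥ z) ⬝ᵥ z := by
              rw [Matrix.mulVec_mulVec, hMtM]
          _ = ∑ j, lam j ^ 2 * z j ^ 2 := by
              simp only [dotProduct, Matrix.mulVec_diagonal]
              exact Finset.sum_congr rfl fun j _ => by ring
      have hpy : M.mulVec z ⬝ᵥ y' = ∑ j, w j * z j := by
        calc M.mulVec z ⬝ᵥ y' = y' ⬝ᵥ M.mulVec z :=
              dotProduct_comm _ _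
          _ = (y' ᵥ* M) ⬝ᵥ z := Matrix.dotProduct_mulVec _ _ _
          _ = (Mᵀ *ᵥ y') ⬝ᵥ z := by rw [Matrix.mulVec_transpose]
          _ = w ⬝ᵥ z := by rw [hwM]
          _ = ∑ j, w j * z j := rfl
      have hyp : y' ⬝ᵥ M.mulVec z = ∑ j, w j * z j := by
        rw [dotProduct_comm]; exact hpy
      rw [hpp, hpy, hyp]
      have hyy : y' ⬝ᵥ y' = y ⬝ᵥ y := rfl
      rw [hyy]
      ring
    rw [h1, h2, h3]
    have hexp : -γ * Real.log σ₁ ^ 2 - σ₂ ^ 2 / 2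
        - ((∑ j, lam j ^ 2 * z j ^ 2) - 2 * (∑ j, w j * z j) + y ⬝ᵥ y) / (2 * σ₂ ^ 2)
        - (∑ j, z j ^ 2) / (2 * σ₁ ^ 2)
        = K + ∑ j, (-a₂ j * z j ^ 2 + a₁ j * z j) := by
      rw [hK, ha₀]
      have : ∀ j ∈ Finset.univ, -a₂ j * z j ^ 2 + a₁ j * z j
          = -(lam j ^ 2 * z j ^ 2) / (2 * σ₂ ^ 2) - z j ^ 2 / (2 * σ₁ ^ 2)
            + (w j * z j) / σ₂ ^ 2 := by
        intro j _
        rw [ha₂ j, ha₁ j]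
        field_simp
        ring
      rw [Finset.sum_congr rfl this]
      simp only [Finset.sum_add_distrib, Finset.sum_sub_distrib, ← Finset.sum_div,
        ← Finset.sum_neg_distrib]
      field_simp
      rw [Finset.sum_neg_distrib]
      ring
    rw [hexp, Real.exp_add, Real.exp_sum]
    have hprod : ∏ j, f j (z j)
        = z i * ∏ j, Real.exp (-a₂ j * z j ^ 2 + a₁ j * z j) := by
      rw [hf]
      simp only
      rw [Finset.prod_mul_distrib, Finset.prod_ite_eq' Finset.univ i (fun j => z j)]
      simp
    rw [hprod]
    ring
  -- the chain of computations
  calc (∫ β : EuclideanSpace ℝ (Fin k),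
        Vᵀ.mulVec β i *
          (C₀ * Real.exp (-γ * Real.log σ₁ ^ 2 - σ₂ ^ 2 / 2
              - ‖(EuclideanSpace.equiv (Fin n) ℝ).symm (X.mulVec β) - y‖ ^ 2 / (2 * σ₂ ^ 2)
              - ‖β‖ ^ 2 / (2 * σ₁ ^ 2))))
      = ∫ x : Fin k → ℝ,
          Vᵀ.mulVec ((MeasurableEquiv.toLp 2 (Fin k → ℝ)) x) i *
          (C₀ * Real.exp (-γ * Real.log σ₁ ^ 2 - σ₂ ^ 2 / 2
              - ‖(EuclideanSpace.equiv (Fin n) ℝ).symm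
                  (X.mulVec ((MeasurableEquiv.toLp 2 (Fin k → ℝ)) x)) - y‖ ^ 2
                  / (2 * σ₂ ^ 2)
              - ‖(MeasurableEquiv.toLp 2 (Fin k → ℝ)) x‖ ^ 2 / (2 * σ₁ ^ 2))) :=
        ((MeasurePreserving.symm (MeasurableEquiv.toLp 2 (Fin k → ℝ)).symm
          (EuclideanSpace.volume_preserving_symm_measurableEquiv_toLp (Fin k))).integral_comp' _).symm
    _ = ∫ z : Fin k → ℝ,
          Vᵀ.mulVec ((MeasurableEquiv.toLp 2 (Fin k → ℝ)) (V.mulVec z)) i *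
          (C₀ * Real.exp (-γ * Real.log σ₁ ^ 2 - σ₂ ^ 2 / 2
              - ‖(EuclideanSpace.equiv (Fin n) ℝ).symm
                  (X.mulVec ((MeasurableEquiv.toLp 2 (Fin k → ℝ)) (V.mulVec z))) - y‖ ^ 2
                  / (2 * σ₂ ^ 2)
              - ‖(MeasurableEquiv.toLp 2 (Fin k → ℝ)) (V.mulVec z)‖ ^ 2
                  / (2 * σ₁ ^ 2))) :=
        (hMP.integral_comp hemb _).symm
    _ = ∫ z : Fin k → ℝ, (C₀ * Real.exp K) * ∏ j, f j (z j) := by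
        exact integral_congr_ae (Filter.Eventually.of_forall hpt)
    _ = (C₀ * Real.exp K) * ∏ j, ∫ t : ℝ, f j t := by
        rw [integral_const_mul, MeasureTheory.integral_fintype_prod_volume_eq_prod f]
    _ = a₁ i / (2 * a₂ i) *
          (C₀ * (Real.exp K * Real.exp (∑ j, a₁ j ^ 2 / (4 * a₂ j))) *
            (2 * Real.pi) ^ ((k : ℝ) / 2) *
            ∏ j, (2 * a₂ j) ^ (-(1 / 2 : ℝ))) := by
        have hint : ∀ j, (∫ t : ℝ, f j t)
            = (if j = i then a₁ i / (2 * a₂ i) else 1) *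
              (Real.sqrt (Real.pi / a₂ j) * Real.exp (a₁ j ^ 2 / (4 * a₂ j))) := by
          intro j
          by_cases hj : j = i
          · subst hj
            simp only [hf, if_pos rfl]
            exact stmt6aux_gauss1 (ha₂pos j) (a₁ j)
          · simp only [hf, if_neg hj, one_mul]
            rw [stmt6aux_gauss0 (ha₂pos j) (a₁ j)]
        simp_rw [hint]
        rw [Finset.prod_mul_distrib, Finset.prod_ite_eq' Finset.univ i
          (fun _ => a₁ i / (2 * a₂ i))]
        have hsqrt : ∀ j, Real.sqrt (Real.pi / a₂ j)
            = Real.sqrt (2 * Real.pi) * (2 * a₂ j) ^ (-(1 / 2 : ℝ)) := by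
          intro j
          have h2a : (0 : ℝ) < 2 * a₂ j := by linarith [ha₂pos j]
          rw [show Real.pi / a₂ j = (2 * Real.pi) / (2 * a₂ j) by
            rw [mul_div_mul_left _ _ (two_ne_zero)]]
          rw [Real.sqrt_div (by positivity : (0:ℝ) ≤ 2 * Real.pi),
            Real.rpow_neg h2a.le, ← Real.sqrt_eq_rpow, div_eq_mul_inv]
        simp_rw [hsqrt]
        rw [Finset.prod_mul_distrib, Finset.prod_mul_distrib, Finset.prod_const,
          ← Real.exp_sum, Finset.card_univ, Fintype.card_fin]
        have hpow : Real.sqrt (2 * Real.pi) ^ k = (2 * Real.pi) ^ ((k : ℝ) / 2) := by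
          rw [Real.sqrt_eq_rpow, ← Real.rpow_natCast ((2 * Real.pi) ^ (1 / (2:ℝ))) k,
            ← Real.rpow_mul (by positivity)]
          congr 1
          ring
        rw [hpow]
        simp only [if_pos rfl, Finset.mem_univ, if_true]
        set P : ℝ := ∏ j, (2 * a₂ j) ^ (-(1 / 2 : ℝ)) with hP
        set Q : ℝ := (2 * Real.pi) ^ ((k : ℝ) / 2) with hQ
        set E₁ : ℝ := Real.exp (∑ j, a₁ j ^ 2 / (4 * a₂ j)) with hE₁
        ring
    _ = a₁ i / (2 * a₂ i) *
          (C₀ *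
            Real.exp (-γ * Real.log σ₁ ^ 2 - σ₂ ^ 2 / 2 + a₀ + ∑ j, a₁ j ^ 2 / (4 * a₂ j)) *
            (2 * Real.pi) ^ ((k : ℝ) / 2) *
            ∏ j, (2 * a₂ j) ^ (-(1 / 2 : ℝ))) := by
        rw [← Real.exp_add, hK]
end

section
/- Let X be a real n×k matrix with singular value decomposition X = U D Vᵀ, where U is an n×k real matrix with UᵀU equal to the k×k identity, V is a k×k real orthogonal matrix, and D is the k×k diagonal matrix with diagonal entries λ₁,…,λ_k. Let y ∈ ℝⁿ, γ ∈ ℝ, and for σ₁ > 0, σ₂ > 0, β ∈ ℝᵏ define q(σ₁,σ₂,β) = σ₁^{−(k+1)} σ₂^{−n} exp( −γ (log σ₁)² − σ₂²/2 − ‖Xβ − y‖²/(2σ₂²) − ‖β‖²/(2σ₁²) ). Set w = VᵀXᵀy, a₂ᵢ = λᵢ²/(2σ₂²) + 1/(2σ₁²), a₁ᵢ = wᵢ/σ₂², a₀ = −yᵀy/(2σ₂²), and q̃(σ₁,σ₂) = σ₁^{−(k+1)} σ₂^{−n} exp( −γ (log σ₁)² − σ₂²/2 + a₀ + ∑_{i=1}^{k}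 a₁ᵢ²/(4 a₂ᵢ) ) · (2π)^{k/2} · ∏_{i=1}^{k} (2 a₂ᵢ)^{−1/2}. Then for all σ₁, σ₂ > 0 and every index i ∈ {1,…,k}, the Lebesgue integral ∫_{ℝᵏ} ( (Vᵀβ)ᵢ − a₁ᵢ/(2 a₂ᵢ) )² · q(σ₁,σ₂,β) dβ equals (2 a₂ᵢ)^{−1} · q̃(σ₁,σ₂). -/
open Matrix MeasureTheory

lemma gauss_lin' {b : ℝ} (c : ℝ) (hb : 0 < b) :
    ∫ x : ℝ, Real.exp (-b * x ^ 2 + c * x)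
      = Real.sqrt (Real.pi / b) * Real.exp (c ^ 2 / (4 * b)) := by
  have key : ∀ x : ℝ, Real.exp (-b * x ^ 2 + c * x)
      = Real.exp (-b * (x - c / (2 * b)) ^ 2) * Real.exp (c ^ 2 / (4 * b)) := by
    intro x
    rw [← Real.exp_add]
    congr 1
    field_simp
    ring
  simp_rw [key]
  rw [integral_mul_const, integral_sub_right_eq_self (fun x => Real.exp (-b * x ^ 2)) (c / (2 * b)),
    integral_gaussian]

lemma gauss_sq' {b : ℝ} (hb : 0 < b) :
    ∫ x : ℝ, x ^ 2 * Real.exp (-b * x ^ 2) = (2 * b)⁻¹ * Real.sqrt (Real.pi / b) := by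
  have h1 : ∫ x : ℝ, x ^ 2 * Real.exp (-b * x ^ 2)
      = 2 * ∫ x in Set.Ioi (0:ℝ), x ^ 2 * Real.exp (-b * x ^ 2) := by
    rw [← _root_.integral_comp_abs (f := fun x => x ^ 2 * Real.exp (-b * x ^ 2))]
    simp [sq_abs]
  have h2 : ∫ x in Set.Ioi (0:ℝ), x ^ 2 * Real.exp (-b * x ^ 2)
      = b ^ (-(2 + 1) / 2 : ℝ) * (1 / 2) * Real.Gamma ((2 + 1) / 2) := by
    rw [← integral_rpow_mul_exp_neg_mul_rpow two_pos (by norm_num) hb]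
    refine setIntegral_congr_fun measurableSet_Ioi (fun x hx => ?_)
    simp [Real.rpow_two]
  have h3 : Real.Gamma ((2 + 1) / 2) = (1 / 2) * Real.sqrt Real.pi := by
    rw [show ((2:ℝ) + 1) / 2 = 1 / 2 + 1 by norm_num, Real.Gamma_add_one (by norm_num),
      Real.Gamma_one_half_eq]
  have h4 : b ^ (-(2 + 1) / 2 : ℝ) = b⁻¹ * (Real.sqrt b)⁻¹ := by
    rw [show (-(2 + 1) / 2 : ℝ) = (-1) + (-(1/2)) by norm_num, Real.rpow_add hb,
      Real.rpow_neg_one, Real.rpow_neg hb.le, ← Real.sqrt_eq_rpow]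
  have h5 : Real.sqrt (Real.pi / b) = Real.sqrt Real.pi / Real.sqrt b :=
    Real.sqrt_div Real.pi_pos.le b
  rw [h1, h2, h3, h4, h5]
  have hsb : Real.sqrt b ≠ 0 := by positivity
  field_simp

lemma gauss_lin_sq' {b : ℝ} (c : ℝ) (hb : 0 < b) :
    ∫ x : ℝ, (x - c / (2 * b)) ^ 2 * Real.exp (-b * x ^ 2 + c * x)
      = (2 * b)⁻¹ * Real.sqrt (Real.pi / b) * Real.exp (c ^ 2 / (4 * b)) := by
  have key : ∀ x : ℝ, (x - c / (2 * b)) ^ 2 * Real.exp (-b * x ^ 2 + c * x)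
      = ((x - c / (2 * b)) ^ 2 * Real.exp (-b * (x - c / (2 * b)) ^ 2))
          * Real.exp (c ^ 2 / (4 * b)) := by
    intro x
    rw [mul_assoc, ← Real.exp_add]
    congr 2
    field_simp
    ring
  simp_rw [key]
  rw [integral_mul_const,
    integral_sub_right_eq_self (fun x => x ^ 2 * Real.exp (-b * x ^ 2)) (c / (2 * b)),
    gauss_sq' hb]

lemma cov' {k : ℕ} (V : Matrix (Fin k) (Fin k) ℝ)
    (hV₁ : Vᵀ * V = 1) (hV₂ : V * Vᵀ = 1)
    (g : (Fin k → ℝ) → ℝ) :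
    ∫ β : EuclideanSpace ℝ (Fin k), g (Vᵀ.mulVec β) = ∫ z : Fin k → ℝ, g z := by
  have hnorm : ∀ β : EuclideanSpace ℝ (Fin k),
      ‖((EuclideanSpace.equiv (Fin k) ℝ).symm (Vᵀ.mulVec β) : EuclideanSpace ℝ (Fin k))‖
        = ‖β‖ := by
    intro β
    rw [EuclideanSpace.norm_eq, EuclideanSpace.norm_eq]
    congr 1
    have key : (Vᵀ.mulVec β) ⬝ᵥ (Vᵀ.mulVec β) = β ⬝ᵥ β := by
      rw [Matrix.dotProduct_mulVec, Matrix.vecMul_transpose, Matrix.mulVec_mulVec, hV₂,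
        Matrix.one_mulVec]
    simpa [dotProduct, Real.norm_eq_abs, sq_abs, pow_two] using key
  let e : EuclideanSpace ℝ (Fin k) ≃ₗᵢ[ℝ] EuclideanSpace ℝ (Fin k) :=
    { toFun := fun β => (EuclideanSpace.equiv (Fin k) ℝ).symm (Vᵀ.mulVec β)
      invFun := fun z => (EuclideanSpace.equiv (Fin k) ℝ).symm (V.mulVec z)
      map_add' := fun x y => by
        ext j
        simp [Matrix.mulVec, dotProduct, PiLp.add_apply, mul_add, Finset.sum_add_distrib]
      map_smul' := fun c x => by
        ext j
        simp [Matrix.mulVec, dotProduct, PiLp.smul_apply, Finset.mul_sum, smul_eq_mul]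
        ring_nf
        simp [mul_comm, mul_assoc, mul_left_comm]
      left_inv := fun x => by
        show (WithLp.toLp 2 (V.mulVec (Vᵀ.mulVec x.ofLp)) : EuclideanSpace ℝ (Fin k)) = x
        rw [Matrix.mulVec_mulVec, hV₂, Matrix.one_mulVec]
      right_inv := fun x => by
        show (WithLp.toLp 2 (Vᵀ.mulVec (V.mulVec x.ofLp)) : EuclideanSpace ℝ (Fin k)) = x
        rw [Matrix.mulVec_mulVec, hV₁, Matrix.one_mulVec]
      norm_map' := hnorm }
  have h1 : ∫ β : EuclideanSpace ℝ (Fin k), g (Vᵀ.mulVec β)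
      = ∫ ζ : EuclideanSpace ℝ (Fin k), g ((MeasurableEquiv.toLp 2 (Fin k → ℝ)).symm ζ) :=
    (MeasureTheory.integral_comp e (fun ζ : EuclideanSpace ℝ (Fin k) =>
      g ((MeasurableEquiv.toLp 2 (Fin k → ℝ)).symm ζ))).symm ▸ rfl
  rw [h1, (EuclideanSpace.volume_preserving_symm_measurableEquiv_toLp (Fin k)).integral_comp']

/-- Formula 385, second central moment of `zᵢ = (Vᵀβ)ᵢ`:
`∫_{ℝᵏ} ((Vᵀβ)ᵢ − a₁ᵢ/(2a₂ᵢ))² q(σ₁,σ₂,β) dβ = (2a₂ᵢ)⁻¹ q̃(σ₁,σ₂)`. -/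
theorem stmt7
    (n k : ℕ) (hn : 0 < n) (hk : 0 < k)
    (X U : Matrix (Fin n) (Fin k) ℝ)
    (V : Matrix (Fin k) (Fin k) ℝ)
    (lam : Fin k → ℝ)
    (hU : Uᵀ * U = 1)
    (hV₁ : Vᵀ * V = 1) (hV₂ : V * Vᵀ = 1)
    (hX : X = U * Matrix.diagonal lam * Vᵀ)
    (y : EuclideanSpace ℝ (Fin n)) (γ : ℝ)
    (σ₁ σ₂ : ℝ) (hσ₁ : 0 < σ₁) (hσ₂ : 0 < σ₂)
    (w : Fin k → ℝ)
    (hw : w = Vᵀ.mulVec (Xᵀ.mulVec y))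
    (a₂ a₁ : Fin k → ℝ) (a₀ : ℝ)
    (ha₂ : ∀ i, a₂ i = lam i ^ 2 / (2 * σ₂ ^ 2) + 1 / (2 * σ₁ ^ 2))
    (ha₁ : ∀ i, a₁ i = w i / σ₂ ^ 2)
    (ha₀ : a₀ = -(y ⬝ᵥ y) / (2 * σ₂ ^ 2))
    (i : Fin k) :
    (∫ β : EuclideanSpace ℝ (Fin k),
        (Vᵀ.mulVec β i - a₁ i / (2 * a₂ i)) ^ 2 *
          (σ₁ ^ (-((k : ℤ) + 1)) * σ₂ ^ (-(n : ℤ)) *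
            Real.exp (-γ * Real.log σ₁ ^ 2 - σ₂ ^ 2 / 2
              - ‖(EuclideanSpace.equiv (Fin n) ℝ).symm (X.mulVec β) - y‖ ^ 2 / (2 * σ₂ ^ 2)
              - ‖β‖ ^ 2 / (2 * σ₁ ^ 2))))
      = (2 * a₂ i)⁻¹ *
          (σ₁ ^ (-((k : ℤ) + 1)) * σ₂ ^ (-(n : ℤ)) *
            Real.exp (-γ * Real.log σ₁ ^ 2 - σ₂ ^ 2 / 2 + a₀ + ∑ j, a₁ j ^ 2 / (4 * a₂ j)) *
            (2 * Real.pi) ^ ((k : ℝ) / 2) *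
            ∏ j, (2 * a₂ j) ^ (-(1 / 2 : ℝ))) := by
  have ha₂pos : ∀ j, 0 < a₂ j := fun j => by rw [ha₂]; positivity
  set P : ℝ := σ₁ ^ (-((k : ℤ) + 1)) * σ₂ ^ (-(n : ℤ)) with hP
  set K : ℝ := -γ * Real.log σ₁ ^ 2 - σ₂ ^ 2 / 2 with hK
  set G : (Fin k → ℝ) → ℝ := fun z => (z i - a₁ i / (2 * a₂ i)) ^ 2 *
      Real.exp (∑ j, (-(a₂ j) * z j ^ 2 + a₁ j * z j)) with hG
  -- Pointwise identity
  have hpt : ∀ β : EuclideanSpace ℝ (Fin k),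
      (Vᵀ.mulVec β i - a₁ i / (2 * a₂ i)) ^ 2 *
          (P * Real.exp (K
              - ‖(EuclideanSpace.equiv (Fin n) ℝ).symm (X.mulVec β) - y‖ ^ 2 / (2 * σ₂ ^ 2)
              - ‖β‖ ^ 2 / (2 * σ₁ ^ 2)))
        = (P * Real.exp (K + a₀)) * G (Vᵀ.mulVec β) := by
    intro β
    set z : Fin k → ℝ := Vᵀ.mulVec β with hz
    have key : z ⬝ᵥ z = β ⬝ᵥ β := by
      rw [hz, Matrix.dotProduct_mulVec, Matrix.vecMul_transpose, Matrix.mulVec_mulVec, hV₂,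
        Matrix.one_mulVec]
    have hb : ‖β‖ ^ 2 = ∑ j, z j ^ 2 := by
      rw [EuclideanSpace.norm_eq, Real.sq_sqrt (by positivity)]
      calc ∑ j, ‖β j‖ ^ 2 = β ⬝ᵥ β := by simp [dotProduct, Real.norm_eq_abs, sq_abs, pow_two]
      _ = z ⬝ᵥ z := key.symm
      _ = ∑ j, z j ^ 2 := by simp [dotProduct, pow_two]
    have hXX : (X.mulVec β) ⬝ᵥ (X.mulVec β) = ∑ j, lam j ^ 2 * z j ^ 2 := by
      have hXb : X.mulVec β = U.mulVec ((Matrix.diagonal lam).mulVec z) := by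
        rw [hX, ← Matrix.mulVec_mulVec, ← Matrix.mulVec_mulVec]
      have hUd : ∀ d : Fin k → ℝ, (U.mulVec d) ⬝ᵥ (U.mulVec d) = d ⬝ᵥ d := by
        intro d
        rw [Matrix.dotProduct_mulVec, ← Matrix.vecMul_transpose, Matrix.vecMul_vecMul, hU,
          Matrix.vecMul_one]
      rw [hXb, hUd]
      simp only [dotProduct, Matrix.mulVec_diagonal]
      exact Finset.sum_congr rfl fun j _ => by ring
    have hXy : (X.mulVec β) ⬝ᵥ (fun j => y j) = ∑ j, w j * z j := by
      have hrhs : (∑ j, w j * z j) = w ⬝ᵥ z := rfl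
      rw [hrhs, hw, hz, Matrix.dotProduct_mulVec (Vᵀ.mulVec (Xᵀ.mulVec y)) Vᵀ β]
      rw [Matrix.vecMul_transpose, Matrix.mulVec_mulVec, hV₂, Matrix.one_mulVec]
      rw [dotProduct_comm, Matrix.dotProduct_mulVec, ← Matrix.mulVec_transpose]
    have hsub : ‖(EuclideanSpace.equiv (Fin n) ℝ).symm (X.mulVec β) - y‖ ^ 2
        = (∑ j, lam j ^ 2 * z j ^ 2) - 2 * (∑ j, w j * z j) + y ⬝ᵥ y := by
      rw [EuclideanSpace.norm_eq, Real.sq_sqrt (by positivity)]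
      have happ : ∀ j, ((EuclideanSpace.equiv (Fin n) ℝ).symm (X.mulVec β) - y
          : EuclideanSpace ℝ (Fin n)) j = X.mulVec β j - y j := fun j => rfl
      calc ∑ j, ‖((EuclideanSpace.equiv (Fin n) ℝ).symm (X.mulVec β) - y
            : EuclideanSpace ℝ (Fin n)) j‖ ^ 2
          = ∑ j, (X.mulVec β j * X.mulVec β j - 2 * (X.mulVec β j * y j) + y j * y j) := by
            refine Finset.sum_congr rfl fun j _ => ?_
            rw [happ j, Real.norm_eq_abs, sq_abs]; ring
        _ = (X.mulVec β) ⬝ᵥ (X.mulVec β) - 2 * ((X.mulVec β) ⬝ᵥ (fun j => y j)) + y ⬝ᵥ y := by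
            rw [Finset.sum_add_distrib, Finset.sum_sub_distrib, ← Finset.mul_sum]
            rfl
        _ = _ := by rw [hXX, hXy]
    -- sum identity
    have hsum : ∑ j, (-(a₂ j) * z j ^ 2 + a₁ j * z j)
        = -(1 / (2 * σ₂ ^ 2)) * (∑ j, lam j ^ 2 * z j ^ 2)
          - (1 / (2 * σ₁ ^ 2)) * (∑ j, z j ^ 2)
          + (1 / σ₂ ^ 2) * (∑ j, w j * z j) := by
      rw [Finset.mul_sum, Finset.mul_sum, Finset.mul_sum, ← Finset.sum_sub_distrib,
        ← Finset.sum_add_distrib]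
      refine Finset.sum_congr rfl fun j _ => ?_
      rw [ha₂ j, ha₁ j]
      field_simp
      ring
    have hexp : K - ‖(EuclideanSpace.equiv (Fin n) ℝ).symm (X.mulVec β) - y‖ ^ 2 / (2 * σ₂ ^ 2)
        - ‖β‖ ^ 2 / (2 * σ₁ ^ 2)
        = (K + a₀) + ∑ j, (-(a₂ j) * z j ^ 2 + a₁ j * z j) := by
      rw [hsub, hb, hsum, ha₀]
      field_simp
      ring
    rw [hexp, Real.exp_add]
    show _ = (P * Real.exp (K + a₀)) *
      ((z i - a₁ i / (2 * a₂ i)) ^ 2 * Real.exp (∑ j, (-(a₂ j) * z j ^ 2 + a₁ j * z j)))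
    ring
  calc (∫ β : EuclideanSpace ℝ (Fin k),
        (Vᵀ.mulVec β i - a₁ i / (2 * a₂ i)) ^ 2 *
          (P * Real.exp (K
              - ‖(EuclideanSpace.equiv (Fin n) ℝ).symm (X.mulVec β) - y‖ ^ 2 / (2 * σ₂ ^ 2)
              - ‖β‖ ^ 2 / (2 * σ₁ ^ 2))))
      = ∫ β : EuclideanSpace ℝ (Fin k), (P * Real.exp (K + a₀)) * G (Vᵀ.mulVec β) :=
        integral_congr_ae (Filter.Eventually.of_forall hpt)
    _ = (P * Real.exp (K + a₀)) * ∫ β : EuclideanSpace ℝ (Fin k), G (Vᵀ.mulVec β) :=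
        integral_const_mul _ _
    _ = (P * Real.exp (K + a₀)) * ∫ z : Fin k → ℝ, G z := by rw [cov' V hV₁ hV₂ G]
    _ = (2 * a₂ i)⁻¹ *
          (P * Real.exp (K + a₀ + ∑ j, a₁ j ^ 2 / (4 * a₂ j)) *
            (2 * Real.pi) ^ ((k : ℝ) / 2) *
            ∏ j, (2 * a₂ j) ^ (-(1 / 2 : ℝ))) := by
      -- factorize the integral over the product space
      classical
      set f : Fin k → ℝ → ℝ := fun j t =>
        (if j = i then (t - a₁ i / (2 * a₂ i)) ^ 2 else 1)
          * Real.exp (-(a₂ j) * t ^ 2 + a₁ j * t) with hf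
      have hGf : ∀ z : Fin k → ℝ, G z = ∏ j, f j (z j) := by
        intro z
        rw [hG]
        simp only [hf]
        rw [Real.exp_sum, Finset.prod_mul_distrib,
          Finset.prod_ite_eq' Finset.univ i (fun j => (z j - a₁ i / (2 * a₂ i)) ^ 2),
          if_pos (Finset.mem_univ i)]
      have hint : ∀ j, (∫ t : ℝ, f j t)
          = (if j = i then (2 * a₂ i)⁻¹ else 1)
              * (Real.sqrt (Real.pi / a₂ j) * Real.exp (a₁ j ^ 2 / (4 * a₂ j))) := by
        intro j
        by_cases hj : j = i
        · subst hj
          simp only [hf, eq_self_iff_true, if_true]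
          rw [gauss_lin_sq' (a₁ j) (ha₂pos j)]
          ring
        · simp only [hf, if_neg hj, one_mul]
          rw [gauss_lin' (a₁ j) (ha₂pos j)]
      have hfact : ∫ z : Fin k → ℝ, G z
          = (2 * a₂ i)⁻¹ * ∏ j, (Real.sqrt (Real.pi / a₂ j)
              * Real.exp (a₁ j ^ 2 / (4 * a₂ j))) := by
        simp_rw [hGf]
        rw [MeasureTheory.integral_fintype_prod_volume_eq_prod f]
        simp_rw [hint]
        rw [Finset.prod_mul_distrib,
          Finset.prod_ite_eq' Finset.univ i (fun _ => (2 * a₂ i)⁻¹),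
          if_pos (Finset.mem_univ i)]
      have hprod : ∏ j, (Real.sqrt (Real.pi / a₂ j) * Real.exp (a₁ j ^ 2 / (4 * a₂ j)))
          = ((2 * Real.pi) ^ ((k : ℝ) / 2) * ∏ j, (2 * a₂ j) ^ (-(1 / 2 : ℝ)))
              * Real.exp (∑ j, a₁ j ^ 2 / (4 * a₂ j)) := by
        have h1 : ∀ j : Fin k, Real.sqrt (Real.pi / a₂ j)
            = (2 * Real.pi) ^ ((1 : ℝ) / 2) * (2 * a₂ j) ^ (-(1 / 2 : ℝ)) := by
          intro j
          have ha := ha₂pos j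
          rw [show Real.pi / a₂ j = (2 * Real.pi) / (2 * a₂ j) by
              rw [mul_div_mul_left _ _ (two_ne_zero)],
            Real.sqrt_eq_rpow, Real.div_rpow (by positivity) (by positivity),
            Real.rpow_neg (by positivity), div_eq_mul_inv]
        have hsqrt : ∏ j, Real.sqrt (Real.pi / a₂ j)
            = (2 * Real.pi) ^ ((k : ℝ) / 2) * ∏ j, (2 * a₂ j) ^ (-(1 / 2 : ℝ)) := by
          calc ∏ j, Real.sqrt (Real.pi / a₂ j)
              = ∏ j, ((2 * Real.pi) ^ ((1 : ℝ) / 2) * (2 * a₂ j) ^ (-(1 / 2 : ℝ))) :=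
                Finset.prod_congr rfl fun j _ => h1 j
            _ = _ := by
                rw [Finset.prod_mul_distrib, Finset.prod_const, Finset.card_univ,
                  Fintype.card_fin, ← Real.rpow_natCast ((2 * Real.pi) ^ ((1:ℝ)/2)) k,
                  ← Real.rpow_mul (by positivity)]
                congr 1
                ring
        rw [Finset.prod_mul_distrib, hsqrt, Real.exp_sum]
      rw [hfact, hprod, Real.exp_add (K + a₀) (∑ j, a₁ j ^ 2 / (4 * a₂ j))]
      ring
end

section
/- Let X be a real n×k matrix with singular value decomposition X = U D Vᵀ, where U is an n×k real matrix with UᵀU equal to the k×k identity, V is a k×k real orthogonal matrix, and D is the k×k diagonal matrix with diagonal entries λ₁,…,λ_k. Let y ∈ ℝⁿ, γ ∈ ℝ, and for σ₁ > 0, σ₂ > 0, β ∈ ℝᵏ define q(σ₁,σ₂,β) = σ₁^{−(k+1)} σ₂^{−n} exp( −γ (log σ₁)² − σ₂²/2 − ‖Xβ − y‖²/(2σ₂²) − ‖β‖²/(2σ₁²) ). Set w = VᵀXᵀy, a₂ᵢ = λᵢ²/(2σ₂²) + 1/(2σ₁²), a₁ᵢ = wᵢ/σ₂², a₀ = −yᵀy/(2σ₂²),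 and q̃(σ₁,σ₂) = σ₁^{−(k+1)} σ₂^{−n} exp( −γ (log σ₁)² − σ₂²/2 + a₀ + ∑_{i=1}^{k} a₁ᵢ²/(4 a₂ᵢ) ) · (2π)^{k/2} · ∏_{i=1}^{k} (2 a₂ᵢ)^{−1/2}. Then for all σ₁, σ₂ > 0, the ℝᵏ-valued Lebesgue integral ∫_{ℝᵏ} β · q(σ₁,σ₂,β) dβ equals q̃(σ₁,σ₂) · V m, where m ∈ ℝᵏ is the vector with components mᵢ = a₁ᵢ/(2 a₂ᵢ). -/
open Matrix MeasureTheory Real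

lemma key_exponent (a b x : ℝ) (ha : a ≠ 0) :
    -a*x^2 + b*x = b^2/(4*a) + (-a*(x - b/(2*a))^2) := by
  field_simp
  ring

lemma gauss_eq (a b : ℝ) (ha : 0 < a) :
    (fun x : ℝ => Real.exp (-a*x^2+b*x))
      = fun x => Real.exp (b^2/(4*a)) * Real.exp (-a*(x - b/(2*a))^2) := by
  funext x
  rw [← Real.exp_add, key_exponent a b x ha.ne']

lemma gauss_integrable (a b : ℝ) (ha : 0 < a) :
    Integrable (fun x : ℝ => Real.exp (-a*x^2+b*x)) := by
  rw [gauss_eq a b ha]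
  exact ((integrable_exp_neg_mul_sq ha).comp_sub_right (b/(2*a))).const_mul _

lemma gauss_moment_integrable (a b : ℝ) (ha : 0 < a) :
    Integrable (fun x : ℝ => x * Real.exp (-a*x^2+b*x)) := by
  have h : (fun x : ℝ => x * Real.exp (-a*x^2+b*x))
      = fun x => Real.exp (b^2/(4*a)) * ((x - b/(2*a)) * Real.exp (-a*(x - b/(2*a))^2))
        + (Real.exp (b^2/(4*a)) * (b/(2*a))) * Real.exp (-a*(x - b/(2*a))^2) := by
    funext x
    rw [key_exponent a b x ha.ne', Real.exp_add]
    ring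
  rw [h]
  exact (((integrable_mul_exp_neg_mul_sq ha).comp_sub_right (b/(2*a))).const_mul _).add
    (((integrable_exp_neg_mul_sq ha).comp_sub_right (b/(2*a))).const_mul _)

lemma gauss_int (a b : ℝ) (ha : 0 < a) :
    ∫ x : ℝ, Real.exp (-a*x^2+b*x) = Real.sqrt (π/a) * Real.exp (b^2/(4*a)) := by
  rw [gauss_eq a b ha, MeasureTheory.integral_const_mul]
  have : ∫ x : ℝ, Real.exp (-a*(x - b/(2*a))^2)
      = ∫ x : ℝ, Real.exp (-a*x^2) := by
    exact MeasureTheory.integral_sub_right_eq_self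
      (μ := volume) (fun x : ℝ => Real.exp (-a*x^2)) (b/(2*a))
  rw [this, integral_gaussian]
  ring

lemma odd_gauss (a : ℝ) : ∫ x : ℝ, x * Real.exp (-a*x^2) = 0 := by
  have h := MeasureTheory.integral_neg_eq_self (fun x : ℝ => x * Real.exp (-a*x^2)) volume
  simp only [neg_sq, neg_mul] at h
  have : ∫ x : ℝ, -(x * Real.exp (-a*x^2)) = ∫ x : ℝ, x * Real.exp (-a*x^2) := by
    simpa [neg_mul] using h
  rw [integral_neg] at this
  linarith

lemma gauss_moment (a b : ℝ) (ha : 0 < a) :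
    ∫ x : ℝ, x * Real.exp (-a*x^2+b*x)
      = (b/(2*a)) * (Real.sqrt (π/a) * Real.exp (b^2/(4*a))) := by
  have step : ∫ x : ℝ, x * Real.exp (-a*x^2+b*x)
      = ∫ x : ℝ, (x + b/(2*a)) * Real.exp (-a*(x + b/(2*a))^2 + b*(x + b/(2*a))) := by
    exact (MeasureTheory.integral_add_right_eq_self
      (μ := volume) (fun x : ℝ => x * Real.exp (-a*x^2+b*x)) (b/(2*a))).symm
  rw [step]
  have h : (fun x : ℝ => (x + b/(2*a)) * Real.exp (-a*(x + b/(2*a))^2 + b*(x + b/(2*a))))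
      = fun x => Real.exp (b^2/(4*a)) * (x * Real.exp (-a*x^2))
        + (Real.exp (b^2/(4*a)) * (b/(2*a))) * Real.exp (-a*x^2) := by
    funext x
    have : -a*(x + b/(2*a))^2 + b*(x + b/(2*a)) = b^2/(4*a) + (-a*x^2) := by
      field_simp; ring
    rw [this, Real.exp_add]
    ring
  rw [h, MeasureTheory.integral_add, MeasureTheory.integral_const_mul,
    MeasureTheory.integral_const_mul, odd_gauss, integral_gaussian]
  · ring
  · exact ((integrable_mul_exp_neg_mul_sq ha).const_mul _)
  · exact ((integrable_exp_neg_mul_sq ha).const_mul _)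

lemma gauss_vec_int' (k : ℕ) (a₂ a₁ : Fin k → ℝ) (h : ∀ i, 0 < a₂ i) :
    ∫ α : EuclideanSpace ℝ (Fin k),
        Real.exp (∑ i, (-(a₂ i) * α i ^ 2 + a₁ i * α i)) • α
      = (∏ j, (Real.sqrt (π / a₂ j) * Real.exp (a₁ j ^ 2 / (4 * a₂ j)))) •
          (WithLp.equiv 2 (Fin k → ℝ)).symm (fun i => a₁ i / (2 * a₂ i)) := by
  have hfi : ∀ j, Integrable (fun t : ℝ => Real.exp (-(a₂ j) * t ^ 2 + a₁ j * t)) :=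
    fun j => gauss_integrable (a₂ j) (a₁ j) (h j)
  set g : Fin k → (j : Fin k) → ℝ → ℝ :=
    fun i j t => (if j = i then t else 1) * Real.exp (-(a₂ j) * t ^ 2 + a₁ j * t) with hg
  have hgi : ∀ i j, Integrable (g i j) := by
    intro i j
    by_cases hji : j = i
    · simpa [hg, hji] using gauss_moment_integrable (a₂ j) (a₁ j) (h j)
    · simpa [hg, hji] using hfi j
  have hgprod : ∀ i, Integrable (fun x : Fin k → ℝ => ∏ j, g i j (x j)) :=
    fun i => Integrable.fintype_prod_dep (hgi i)
  -- the integrand on Pi space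
  set Φ : (Fin k → ℝ) → EuclideanSpace ℝ (Fin k) :=
    fun x => Real.exp (∑ i, (-(a₂ i) * x i ^ 2 + a₁ i * x i)) •
      (WithLp.equiv 2 (Fin k → ℝ)).symm x with hΦ
  have hΦdecomp : Φ = fun x => ∑ i, (∏ j, g i j (x j)) • EuclideanSpace.single i (1:ℝ) := by
    funext x
    ext i
    simp only [hΦ, PiLp.smul_apply, WithLp.equiv_symm_apply, PiLp.toLp_apply, smul_eq_mul,
      EuclideanSpace.single_apply, Real.exp_sum]
    trans ∑ j, ((∏ l, g j l (x l)) • EuclideanSpace.single j (1:ℝ)) i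
    swap
    · exact (map_sum (EuclideanSpace.projₗ (𝕜 := ℝ) i)
        (fun j => (∏ l, g j l (x l)) • EuclideanSpace.single j (1:ℝ)) Finset.univ).symm
    rw [Finset.sum_congr rfl (fun j _ => by
      simp only [PiLp.smul_apply, EuclideanSpace.single_apply, smul_eq_mul] : ∀ j ∈ Finset.univ,
        ((∏ l, g j l (x l)) • EuclideanSpace.single j (1:ℝ)) i
          = (∏ l, g j l (x l)) * (if i = j then (1:ℝ) else 0))]
    simp only [mul_ite, mul_one, mul_zero]
    rw [Finset.sum_ite_eq Finset.univ i (fun j => ∏ l, g j l (x l))]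
    simp only [Finset.mem_univ, if_true, mul_one, hg]
    rw [Finset.prod_mul_distrib, Finset.prod_ite_eq' Finset.univ i (fun l => x l)]
    simp [mul_comm]
  have hΦint : Integrable Φ := by
    rw [hΦdecomp]
    exact integrable_finset_sum _ (fun i _ => (hgprod i).smul_const _)
  -- transfer to Pi space
  have hmp := (EuclideanSpace.volume_preserving_symm_measurableEquiv_toLp (Fin k)).symm
  have htrans : ∫ α : EuclideanSpace ℝ (Fin k),
      Real.exp (∑ i, (-(a₂ i) * α i ^ 2 + a₁ i * α i)) • α = ∫ x : Fin k → ℝ, Φ x := by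
    rw [← hmp.integral_comp (MeasurableEquiv.measurableEmbedding _)]
    rfl
  rw [htrans]
  ext i
  show (EuclideanSpace.proj (𝕜 := ℝ) i) (∫ x : Fin k → ℝ, Φ x) = _
  rw [← (EuclideanSpace.proj (𝕜 := ℝ) i).integral_comp_comm hΦint]
  have : (fun x : Fin k → ℝ => (EuclideanSpace.proj (𝕜 := ℝ) i) (Φ x))
      = fun x => ∏ j, g i j (x j) := by
    funext x
    show Real.exp (∑ i, (-(a₂ i) * x i ^ 2 + a₁ i * x i)) * x i = _
    simp only [Real.exp_sum, hg]
    rw [Finset.prod_mul_distrib, Finset.prod_ite_eq' Finset.univ i (fun l => x l)]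
    simp [mul_comm]
  rw [this, MeasureTheory.integral_fintype_prod_volume_eq_prod (f := g i)]
  have hval : ∀ j, (∫ t : ℝ, g i j t)
      = (if j = i then a₁ j / (2 * a₂ j) else 1) *
          (Real.sqrt (π / a₂ j) * Real.exp (a₁ j ^ 2 / (4 * a₂ j))) := by
    intro j
    by_cases hji : j = i
    · simp only [hg, hji, if_true]
      simpa using gauss_moment (a₂ i) (a₁ i) (h i)
    · simp only [hg, hji, if_false, one_mul]
      simpa using gauss_int (a₂ j) (a₁ j) (h j)
  rw [Finset.prod_congr rfl (fun j _ => hval j), Finset.prod_mul_distrib,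
    Finset.prod_ite_eq' Finset.univ i (fun j => a₁ j / (2 * a₂ j))]
  simp only [Finset.mem_univ, if_true, PiLp.smul_apply, WithLp.equiv_symm_apply, PiLp.toLp_apply, smul_eq_mul]
  ring

lemma mulVec_dot {n k : ℕ} (A : Matrix (Fin n) (Fin k) ℝ) (x : Fin k → ℝ) (y : Fin n → ℝ) :
    (A *ᵥ x) ⬝ᵥ y = x ⬝ᵥ (Aᵀ *ᵥ y) := by
  rw [dotProduct_comm, Matrix.dotProduct_mulVec, dotProduct_comm,
    Matrix.mulVec_transpose]

lemma mulVec_dot_self {n k : ℕ} (A : Matrix (Fin n) (Fin k) ℝ) (x y : Fin k → ℝ) :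
    (A *ᵥ x) ⬝ᵥ (A *ᵥ y) = x ⬝ᵥ ((Aᵀ * A) *ᵥ y) := by
  rw [mulVec_dot, Matrix.mulVec_mulVec]

noncomputable def matLinEquiv {k : ℕ} (V : Matrix (Fin k) (Fin k) ℝ)
    (hV₁ : Vᵀ * V = 1) (hV₂ : V * Vᵀ = 1) : (Fin k → ℝ) ≃ₗ[ℝ] (Fin k → ℝ) :=
  LinearEquiv.ofLinear (Matrix.toLin' V) (Matrix.toLin' Vᵀ)
    (by rw [← Matrix.toLin'_mul, hV₂, Matrix.toLin'_one])
    (by rw [← Matrix.toLin'_mul, hV₁, Matrix.toLin'_one])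

noncomputable def vIso {k : ℕ} (V : Matrix (Fin k) (Fin k) ℝ)
    (hV₁ : Vᵀ * V = 1) (hV₂ : V * Vᵀ = 1) :
    EuclideanSpace ℝ (Fin k) ≃ₗᵢ[ℝ] EuclideanSpace ℝ (Fin k) where
  toLinearEquiv := (WithLp.linearEquiv 2 ℝ (Fin k → ℝ)).trans
    ((matLinEquiv V hV₁ hV₂).trans (WithLp.linearEquiv 2 ℝ (Fin k → ℝ)).symm)
  norm_map' := by
    intro x
    have key : (V *ᵥ (x : Fin k → ℝ)) ⬝ᵥ (V *ᵥ (x : Fin k → ℝ)) = (x : Fin k → ℝ) ⬝ᵥ x := by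
      rw [mulVec_dot_self, hV₁, Matrix.one_mulVec]
    simp only [dotProduct] at key
    rw [EuclideanSpace.norm_eq, EuclideanSpace.norm_eq]
    congr 1
    calc ∑ i, ‖((WithLp.linearEquiv 2 ℝ (Fin k → ℝ)).trans
          ((matLinEquiv V hV₁ hV₂).trans (WithLp.linearEquiv 2 ℝ (Fin k → ℝ)).symm)) x i‖ ^ 2
        = ∑ i, (V *ᵥ (x : Fin k → ℝ)) i * (V *ᵥ (x : Fin k → ℝ)) i := by
          apply Finset.sum_congr rfl
          intro i _
          rw [Real.norm_eq_abs, sq_abs, pow_two]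
          rfl
      _ = ∑ i, (x : Fin k → ℝ) i * (x : Fin k → ℝ) i := key
      _ = ∑ i, ‖x i‖ ^ 2 := by
          apply Finset.sum_congr rfl
          intro i _
          rw [Real.norm_eq_abs, sq_abs, pow_two]

lemma vIso_apply {k : ℕ} (V : Matrix (Fin k) (Fin k) ℝ)
    (hV₁ : Vᵀ * V = 1) (hV₂ : V * Vᵀ = 1) (x : EuclideanSpace ℝ (Fin k)) :
    vIso V hV₁ hV₂ x = (WithLp.equiv 2 (Fin k → ℝ)).symm (V *ᵥ (x : Fin k → ℝ)) := rfl

/-- conditional form of eq. (570):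
`∫_{ℝᵏ} β q(σ₁,σ₂,β) dβ = q̃(σ₁,σ₂) · V m` where `mᵢ = a₁ᵢ/(2a₂ᵢ)`. -/
theorem stmt8
    (n k : ℕ) (hn : 0 < n) (hk : 0 < k)
    (X U : Matrix (Fin n) (Fin k) ℝ)
    (V : Matrix (Fin k) (Fin k) ℝ)
    (lam : Fin k → ℝ)
    (hU : Uᵀ * U = 1)
    (hV₁ : Vᵀ * V = 1) (hV₂ : V * Vᵀ = 1)
    (hX : X = U * Matrix.diagonal lam * Vᵀ)
    (y : EuclideanSpace ℝ (Fin n)) (γ : ℝ)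
    (σ₁ σ₂ : ℝ) (hσ₁ : 0 < σ₁) (hσ₂ : 0 < σ₂)
    (w : Fin k → ℝ)
    (hw : w = Vᵀ.mulVec (Xᵀ.mulVec y))
    (a₂ a₁ : Fin k → ℝ) (a₀ : ℝ)
    (ha₂ : ∀ i, a₂ i = lam i ^ 2 / (2 * σ₂ ^ 2) + 1 / (2 * σ₁ ^ 2))
    (ha₁ : ∀ i, a₁ i = w i / σ₂ ^ 2)
    (ha₀ : a₀ = -(y ⬝ᵥ y) / (2 * σ₂ ^ 2))
    (m : Fin k → ℝ)
    (hm : ∀ i, m i = a₁ i / (2 * a₂ i)) :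
    (∫ β : EuclideanSpace ℝ (Fin k),
        (σ₁ ^ (-((k : ℤ) + 1)) * σ₂ ^ (-(n : ℤ)) *
          Real.exp (-γ * Real.log σ₁ ^ 2 - σ₂ ^ 2 / 2
            - ‖(EuclideanSpace.equiv (Fin n) ℝ).symm (X.mulVec β) - y‖ ^ 2 / (2 * σ₂ ^ 2)
            - ‖β‖ ^ 2 / (2 * σ₁ ^ 2))) • β)
      = (σ₁ ^ (-((k : ℤ) + 1)) * σ₂ ^ (-(n : ℤ)) *
          Real.exp (-γ * Real.log σ₁ ^ 2 - σ₂ ^ 2 / 2 + a₀ + ∑ j, a₁ j ^ 2 / (4 * a₂ j)) *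
          (2 * Real.pi) ^ ((k : ℝ) / 2) *
          ∏ j, (2 * a₂ j) ^ (-(1 / 2 : ℝ))) •
          (EuclideanSpace.equiv (Fin k) ℝ).symm (V.mulVec m) := by
  have hσ₁2 : (σ₁:ℝ)^2 ≠ 0 := by positivity
  have hσ₂2 : (σ₂:ℝ)^2 ≠ 0 := by positivity
  have hπ2 : (0:ℝ) ≤ 2 * π := by positivity
  have ha₂pos : ∀ i, 0 < a₂ i := fun i => by
    rw [ha₂ i]; positivity
  have hXV : X * V = U * Matrix.diagonal lam := by
    rw [hX, Matrix.mul_assoc, hV₁, Matrix.mul_one]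
  have hUDdiag : (U * Matrix.diagonal lam)ᵀ * (U * Matrix.diagonal lam)
      = Matrix.diagonal (fun i => lam i ^ 2) := by
    rw [Matrix.transpose_mul, Matrix.mul_assoc, ← Matrix.mul_assoc Uᵀ, hU, Matrix.one_mul,
      Matrix.diagonal_transpose, Matrix.diagonal_mul_diagonal]
    congr 1
    funext i
    ring
  have hwv : w = (U * Matrix.diagonal lam)ᵀ *ᵥ y := by
    rw [hw, Matrix.mulVec_mulVec, ← Matrix.transpose_mul, hXV]
  set e := vIso V hV₁ hV₂ with he
  set c₀ : ℝ := σ₁ ^ (-((k : ℤ) + 1)) * σ₂ ^ (-(n : ℤ)) with hc₀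
  set A : ℝ := -γ * Real.log σ₁ ^ 2 - σ₂ ^ 2 / 2 with hA
  -- the exponent identity
  have hS : ∀ α : EuclideanSpace ℝ (Fin k),
      A - ‖(EuclideanSpace.equiv (Fin n) ℝ).symm (X.mulVec (e α)) - y‖ ^ 2 / (2 * σ₂ ^ 2)
        - ‖e α‖ ^ 2 / (2 * σ₁ ^ 2)
      = (A + a₀) + ∑ i, (-(a₂ i) * α i ^ 2 + a₁ i * α i) := by
    intro α
    have hz : X.mulVec (e α) = (U * Matrix.diagonal lam) *ᵥ (α : Fin k → ℝ) := by
      rw [vIso_apply]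
      show X *ᵥ (V *ᵥ (α : Fin k → ℝ)) = _
      rw [Matrix.mulVec_mulVec, hXV]
    have h1 : ‖(EuclideanSpace.equiv (Fin n) ℝ).symm (X.mulVec (e α))‖ ^ 2
        = ∑ i, lam i ^ 2 * α i ^ 2 := by
      rw [← real_inner_self_eq_norm_sq, PiLp.inner_apply]
      simp only [RCLike.inner_apply, conj_trivial]
      show ((X.mulVec (e α)) ⬝ᵥ (X.mulVec (e α))) = _
      rw [hz, mulVec_dot_self, hUDdiag]
      apply Finset.sum_congr rfl
      intro i _
      show (α : Fin k → ℝ) i * (Matrix.diagonal (fun i => lam i ^ 2) *ᵥ (α : Fin k → ℝ)) i = _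
      rw [Matrix.mulVec_diagonal]
      ring
    have h2 : (inner ℝ ((EuclideanSpace.equiv (Fin n) ℝ).symm (X.mulVec (e α))) y : ℝ)
        = ∑ i, w i * α i := by
      rw [PiLp.inner_apply]
      simp only [RCLike.inner_apply, conj_trivial]
      show ((y : Fin n → ℝ) ⬝ᵥ (X.mulVec (e α))) = _
      rw [dotProduct_comm, hz, mulVec_dot, dotProduct_comm, ← hwv]
      rfl
    have h3 : ‖y‖ ^ 2 = y ⬝ᵥ y := by
      rw [← real_inner_self_eq_norm_sq, PiLp.inner_apply]
      simp only [RCLike.inner_apply, conj_trivial]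
      rfl
    have hns : ‖(EuclideanSpace.equiv (Fin n) ℝ).symm (X.mulVec (e α)) - y‖ ^ 2
        = (∑ i, lam i ^ 2 * α i ^ 2) - 2 * (∑ i, w i * α i) + y ⬝ᵥ y := by
      rw [norm_sub_sq_real, h1, h2, h3]
    have hna : ‖e α‖ ^ 2 = ∑ i, α i ^ 2 := by
      rw [e.norm_map, ← real_inner_self_eq_norm_sq, PiLp.inner_apply]
      simp only [RCLike.inner_apply, conj_trivial]
      exact Finset.sum_congr rfl fun i _ => (pow_two (α i)).symm
    have hsum : ∑ i, (-(a₂ i) * α i ^ 2 + a₁ i * α i)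
        = (-(1/(2*σ₂^2)) * (∑ i, lam i ^ 2 * α i ^ 2) + (1/σ₂^2) * (∑ i, w i * α i))
            - (1/(2*σ₁^2)) * (∑ i, α i ^ 2) := by
      rw [Finset.mul_sum, Finset.mul_sum, Finset.mul_sum, ← Finset.sum_add_distrib,
        ← Finset.sum_sub_distrib]
      apply Finset.sum_congr rfl
      intro i _
      rw [ha₂, ha₁]
      field_simp
      ring
    rw [hns, hna, ha₀, hsum]
    field_simp
    ring
  -- change of variables
  rw [show (∫ β : EuclideanSpace ℝ (Fin k),
        (c₀ * Real.exp (A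
            - ‖(EuclideanSpace.equiv (Fin n) ℝ).symm (X.mulVec β) - y‖ ^ 2 / (2 * σ₂ ^ 2)
            - ‖β‖ ^ 2 / (2 * σ₁ ^ 2))) • β)
      = ∫ α : EuclideanSpace ℝ (Fin k),
        (c₀ * Real.exp (A
            - ‖(EuclideanSpace.equiv (Fin n) ℝ).symm (X.mulVec (e α)) - y‖ ^ 2 / (2 * σ₂ ^ 2)
            - ‖e α‖ ^ 2 / (2 * σ₁ ^ 2))) • (e α) from
    (e.measurePreserving.integral_comp e.toHomeomorph.measurableEmbedding _).symm]
  have hfun : (fun α : EuclideanSpace ℝ (Fin k) =>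
      (c₀ * Real.exp (A
          - ‖(EuclideanSpace.equiv (Fin n) ℝ).symm (X.mulVec (e α)) - y‖ ^ 2 / (2 * σ₂ ^ 2)
          - ‖e α‖ ^ 2 / (2 * σ₁ ^ 2))) • (e α))
      = fun α => e.toContinuousLinearEquiv
          ((c₀ * Real.exp (A + a₀)) • (Real.exp (∑ i, (-(a₂ i) * α i ^ 2 + a₁ i * α i)) • α)) := by
    funext α
    rw [hS α, Real.exp_add]
    show _ = e (((c₀ * Real.exp (A + a₀))) • (Real.exp (∑ i, (-(a₂ i) * α i ^ 2 + a₁ i * α i)) • α))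
    rw [LinearIsometryEquiv.map_smul, LinearIsometryEquiv.map_smul, smul_smul]
    congr 1
    rw [hc₀]
    ring
  rw [hfun, ContinuousLinearEquiv.integral_comp_comm, integral_smul, gauss_vec_int' k a₂ a₁ ha₂pos]
  -- final assembly
  have hmm : (fun i => a₁ i / (2 * a₂ i)) = m := funext fun i => (hm i).symm
  rw [hmm]
  show e ((c₀ * Real.exp (A + a₀)) •
      ((∏ j, (Real.sqrt (π / a₂ j) * Real.exp (a₁ j ^ 2 / (4 * a₂ j)))) •
        (WithLp.equiv 2 (Fin k → ℝ)).symm m)) = _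
  rw [LinearIsometryEquiv.map_smul, LinearIsometryEquiv.map_smul, vIso_apply]
  have hprod : (∏ j, (Real.sqrt (π / a₂ j) * Real.exp (a₁ j ^ 2 / (4 * a₂ j))))
      = ((2*π) ^ ((k:ℝ)/2) * ∏ j, (2 * a₂ j) ^ (-(1/2:ℝ))) * Real.exp (∑ j, a₁ j ^ 2 / (4 * a₂ j)) := by
    rw [Finset.prod_mul_distrib, ← Real.exp_sum]
    congr 1
    have h1 : ∀ j, Real.sqrt (π / a₂ j) = Real.sqrt (2*π) * (2 * a₂ j) ^ (-(1/2:ℝ)) := by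
      intro j
      have h2a : (0:ℝ) < 2 * a₂ j := by have := ha₂pos j; linarith
      rw [Real.rpow_neg h2a.le, ← Real.sqrt_eq_rpow, ← div_eq_mul_inv, ← Real.sqrt_div hπ2]
      congr 1
      rw [mul_div_mul_left _ _ (two_ne_zero)]
    rw [Finset.prod_congr rfl (fun j _ => h1 j), Finset.prod_mul_distrib, Finset.prod_const,
      Finset.card_univ, Fintype.card_fin]
    congr 1
    rw [Real.sqrt_eq_rpow, ← Real.rpow_natCast ((2*π) ^ ((1:ℝ)/2)) k, ← Real.rpow_mul hπ2]
    congr 1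
    ring
  rw [hprod]
  -- both sides are scalar multiples of the same vector
  ext i
  show (c₀ * Real.exp (A + a₀)) * ((((2*π) ^ ((k:ℝ)/2) * ∏ j, (2 * a₂ j) ^ (-(1/2:ℝ)))
      * Real.exp (∑ j, a₁ j ^ 2 / (4 * a₂ j))) * (V *ᵥ m) i)
    = (c₀ * Real.exp (A + a₀ + ∑ j, a₁ j ^ 2 / (4 * a₂ j)) * (2*π) ^ ((k:ℝ)/2)
        * ∏ j, (2 * a₂ j) ^ (-(1/2:ℝ))) * (V *ᵥ m) i
  rw [Real.exp_add (A + a₀)]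
  ring
end

section
/- Let X be a real n×k matrix with singular value decomposition X = U D Vᵀ, where U is an n×k real matrix with UᵀU equal to the k×k identity, V is a k×k real orthogonal matrix, and D is the k×k diagonal matrix with diagonal entries λ₁,…,λ_k. Let y ∈ ℝⁿ, γ ∈ ℝ, and for σ₁ > 0, σ₂ > 0, β ∈ ℝᵏ define q(σ₁,σ₂,β) = σ₁^{−(k+1)} σ₂^{−n} exp( −γ (log σ₁)² − σ₂²/2 − ‖Xβ − y‖²/(2σ₂²) − ‖β‖²/(2σ₁²) ). Set w = VᵀXᵀy, a₂ᵢ = λᵢ²/(2σ₂²) + 1/(2σ₁²), a₁ᵢ = wᵢ/σ₂², a₀ = −yᵀy/(2σ₂²), q̃(σ₁,σ₂) = σ₁^{−(k+1)} σ₂^{−n} exp( −γ (log σ₁)² − σ₂²/2 + a₀ + ∑_{i=1}^{k} a₁ᵢ²/(4 a₂ᵢ) ) · (2π)^{k/2} · ∏_{i=1}^{k} (2 a₂ᵢ)^{−1/2}, and let μ = V m ∈ ℝᵏ where mᵢ = a₁ᵢ/(2 a₂ᵢ). Then for all σ₁, σ₂ > 0, the matrix-valued Lebesgue integral ∫_{ℝᵏ}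 (β − μ)(β − μ)ᵀ · q(σ₁,σ₂,β) dβ equals q̃(σ₁,σ₂) · V Λ Vᵀ, where Λ is the k×k diagonal matrix with diagonal entries (2 a₂ᵢ)^{−1}. -/
open Matrix MeasureTheory Real Filter

section AuxOneDim

lemma aux_tendsto_exp_sq (a : ℝ) (ha : 0 < a) :
    Tendsto (fun x : ℝ => Real.exp (-a * x ^ 2)) atTop (nhds 0) := by
  have h1 : Tendsto (fun x : ℝ => a * x ^ 2) atTop atTop :=
    Tendsto.const_mul_atTop ha (tendsto_pow_atTop two_ne_zero)
  have := Real.tendsto_exp_atBot.comp (tendsto_neg_atTop_atBot.comp h1)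
  simpa [Function.comp_def, neg_mul] using this

lemma aux_tendsto_exp_sq' (a : ℝ) (ha : 0 < a) :
    Tendsto (fun x : ℝ => Real.exp (-a * x ^ 2)) atBot (nhds 0) := by
  have := (aux_tendsto_exp_sq a ha).comp tendsto_neg_atBot_atTop
  simpa [Function.comp_def, neg_sq] using this

lemma aux_tendsto_x_exp (a : ℝ) (ha : 0 < a) :
    Tendsto (fun x : ℝ => x * Real.exp (-a * x ^ 2)) atTop (nhds 0) := by
  have h := rpow_mul_exp_neg_mul_sq_isLittleO_exp_neg ha 1
  have h2 : Tendsto (fun x : ℝ => Real.exp (-(1/2) * x)) atTop (nhds 0) := by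
    have h3 : Tendsto (fun x : ℝ => (1/2 : ℝ) * x) atTop atTop :=
      Tendsto.const_mul_atTop (by norm_num) tendsto_id
    have := Real.tendsto_exp_atBot.comp (tendsto_neg_atTop_atBot.comp h3)
    simpa [Function.comp_def, neg_mul] using this
  have h4 := h.tendsto_zero_of_tendsto h2
  refine h4.congr' ?_
  filter_upwards [eventually_ge_atTop (0:ℝ)] with x hx
  rw [Real.rpow_one]

lemma aux_tendsto_x_exp' (a : ℝ) (ha : 0 < a) :
    Tendsto (fun x : ℝ => x * Real.exp (-a * x ^ 2)) atBot (nhds 0) := by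
  have := ((aux_tendsto_x_exp a ha).comp tendsto_neg_atBot_atTop).neg
  simpa [Function.comp_def, neg_sq] using this

lemma int_x_exp (a : ℝ) (ha : 0 < a) : ∫ x : ℝ, x * Real.exp (-a * x ^ 2) = 0 := by
  have hderiv : ∀ x : ℝ, HasDerivAt (fun x : ℝ => -(2 * a)⁻¹ * Real.exp (-a * x ^ 2))
      (x * Real.exp (-a * x ^ 2)) x := by
    intro x
    have h := (((hasDerivAt_pow 2 x).const_mul (-a)).exp).const_mul (-(2 * a)⁻¹)
    refine h.congr_deriv ?_
    field_simp
    ring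
  have := integral_of_hasDerivAt_of_tendsto hderiv (integrable_mul_exp_neg_mul_sq ha)
    (((aux_tendsto_exp_sq' a ha).const_mul _)) (((aux_tendsto_exp_sq a ha).const_mul _))
  simpa using this

lemma integrable_x2_exp (a : ℝ) (ha : 0 < a) :
    Integrable (fun x : ℝ => x ^ 2 * Real.exp (-a * x ^ 2)) := by
  have := integrable_rpow_mul_exp_neg_mul_sq ha (by norm_num : (-1:ℝ) < 2)
  simpa [Real.rpow_natCast] using this

lemma int_x2_exp (a : ℝ) (ha : 0 < a) :
    ∫ x : ℝ, x ^ 2 * Real.exp (-a * x ^ 2) = (2 * a)⁻¹ * Real.sqrt (Real.pi / a) := by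
  have hderiv : ∀ x : ℝ, HasDerivAt (fun x : ℝ => -(2 * a)⁻¹ * (x * Real.exp (-a * x ^ 2)))
      (x ^ 2 * Real.exp (-a * x ^ 2) - (2 * a)⁻¹ * Real.exp (-a * x ^ 2)) x := by
    intro x
    have h1 := (hasDerivAt_id x).mul (((hasDerivAt_pow 2 x).const_mul (-a)).exp)
    have h := h1.const_mul (-(2 * a)⁻¹)
    refine h.congr_deriv ?_
    field_simp
    simp only [id]
    ring
  have hint : Integrable (fun x : ℝ =>
      x ^ 2 * Real.exp (-a * x ^ 2) - (2 * a)⁻¹ * Real.exp (-a * x ^ 2)) :=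
    (integrable_x2_exp a ha).sub ((integrable_exp_neg_mul_sq ha).const_mul _)
  have h0 := integral_of_hasDerivAt_of_tendsto hderiv hint
    ((aux_tendsto_x_exp' a ha).const_mul _) ((aux_tendsto_x_exp a ha).const_mul _)
  rw [integral_sub (integrable_x2_exp a ha) ((integrable_exp_neg_mul_sq ha).const_mul _),
    integral_const_mul, integral_gaussian] at h0
  simp only [mul_zero, sub_zero] at h0
  linarith [h0]

lemma gauss_shift (a b : ℝ) (ha : 0 < a) (x : ℝ) :
    Real.exp (-a * x ^ 2 + b * x)
      = Real.exp (b ^ 2 / (4 * a)) * Real.exp (-a * (x - b / (2 * a)) ^ 2) := by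
  rw [← Real.exp_add]
  congr 1
  field_simp
  ring

lemma integrable_g (a b : ℝ) (ha : 0 < a) :
    Integrable (fun x : ℝ => Real.exp (-a * x ^ 2 + b * x)) := by
  have : (fun x : ℝ => Real.exp (-a * x ^ 2 + b * x))
      = fun x => Real.exp (b ^ 2 / (4 * a)) * Real.exp (-a * (x - b / (2 * a)) ^ 2) := by
    funext x; exact gauss_shift a b ha x
  rw [this]
  exact (((integrable_exp_neg_mul_sq ha)).comp_sub_right (b / (2 * a))).const_mul _

lemma integrable_g1 (a b c : ℝ) (ha : 0 < a) :
    Integrable (fun x : ℝ => (x - c) * Real.exp (-a * x ^ 2 + b * x)) := by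
  set m := b / (2 * a) with hm
  set K := Real.exp (b ^ 2 / (4 * a)) with hK
  have : (fun x : ℝ => (x - c) * Real.exp (-a * x ^ 2 + b * x))
      = fun x => (fun u : ℝ => K * (u * Real.exp (-a * u ^ 2))
          + (K * (m - c)) * Real.exp (-a * u ^ 2)) (x - m) := by
    funext x
    simp only [gauss_shift a b ha x, ← hm, ← hK]
    ring
  rw [this]
  exact (((integrable_mul_exp_neg_mul_sq ha).const_mul K).add
    ((integrable_exp_neg_mul_sq ha).const_mul _)).comp_sub_right m

lemma integrable_g2 (a b c c' : ℝ) (ha : 0 < a) :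
    Integrable (fun x : ℝ => (x - c) * ((x - c') * Real.exp (-a * x ^ 2 + b * x))) := by
  set m := b / (2 * a) with hm
  set K := Real.exp (b ^ 2 / (4 * a)) with hK
  have : (fun x : ℝ => (x - c) * ((x - c') * Real.exp (-a * x ^ 2 + b * x)))
      = fun x => (fun u : ℝ => K * (u ^ 2 * Real.exp (-a * u ^ 2))
          + ((K * ((m - c) + (m - c'))) * (u * Real.exp (-a * u ^ 2))
          + (K * ((m - c) * (m - c'))) * Real.exp (-a * u ^ 2))) (x - m) := by
    funext x
    simp only [gauss_shift a b ha x, ← hm, ← hK]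
    ring
  rw [this]
  exact ((((integrable_x2_exp a ha).const_mul K).add
    (((integrable_mul_exp_neg_mul_sq ha).const_mul _).add
      ((integrable_exp_neg_mul_sq ha).const_mul _))).comp_sub_right m)

lemma int_g (a b : ℝ) (ha : 0 < a) :
    ∫ x : ℝ, Real.exp (-a * x ^ 2 + b * x)
      = Real.exp (b ^ 2 / (4 * a)) * Real.sqrt (Real.pi / a) := by
  have : (fun x : ℝ => Real.exp (-a * x ^ 2 + b * x))
      = fun x => (fun u : ℝ => Real.exp (b ^ 2 / (4 * a)) * Real.exp (-a * u ^ 2))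
          (x - b / (2 * a)) := by
    funext x; exact gauss_shift a b ha x
  rw [this, integral_sub_right_eq_self
    (fun u : ℝ => Real.exp (b ^ 2 / (4 * a)) * Real.exp (-a * u ^ 2)) (b / (2 * a)),
    integral_const_mul, integral_gaussian]

lemma int_g1 (a b : ℝ) (ha : 0 < a) :
    ∫ x : ℝ, (x - b / (2 * a)) * Real.exp (-a * x ^ 2 + b * x) = 0 := by
  have : (fun x : ℝ => (x - b / (2 * a)) * Real.exp (-a * x ^ 2 + b * x))
      = fun x => (fun u : ℝ => Real.exp (b ^ 2 / (4 * a)) * (u * Real.exp (-a * u ^ 2)))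
          (x - b / (2 * a)) := by
    funext x
    simp only [gauss_shift a b ha x]
    ring
  rw [this, integral_sub_right_eq_self
    (fun u : ℝ => Real.exp (b ^ 2 / (4 * a)) * (u * Real.exp (-a * u ^ 2))) (b / (2 * a)),
    integral_const_mul, int_x_exp a ha, mul_zero]

lemma int_g2 (a b : ℝ) (ha : 0 < a) :
    ∫ x : ℝ, (x - b / (2 * a)) * ((x - b / (2 * a)) * Real.exp (-a * x ^ 2 + b * x))
      = (2 * a)⁻¹ * (Real.exp (b ^ 2 / (4 * a)) * Real.sqrt (Real.pi / a)) := by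
  have : (fun x : ℝ => (x - b / (2 * a)) * ((x - b / (2 * a)) * Real.exp (-a * x ^ 2 + b * x)))
      = fun x => (fun u : ℝ => Real.exp (b ^ 2 / (4 * a)) * (u ^ 2 * Real.exp (-a * u ^ 2)))
          (x - b / (2 * a)) := by
    funext x
    simp only [gauss_shift a b ha x]
    ring
  rw [this, integral_sub_right_eq_self
    (fun u : ℝ => Real.exp (b ^ 2 / (4 * a)) * (u ^ 2 * Real.exp (-a * u ^ 2))) (b / (2 * a)),
    integral_const_mul, int_x2_exp a ha]
  ring

lemma sqrt_pi_div (a : ℝ) (ha : 0 < a) :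
    Real.sqrt (Real.pi / a) = Real.sqrt (2 * Real.pi) * (2 * a) ^ (-(1/2 : ℝ)) := by
  have h : Real.pi / a = (2 * Real.pi) / (2 * a) := by
    rw [mul_div_mul_left _ _ (two_ne_zero)]
  rw [h, Real.sqrt_div (by positivity), Real.rpow_neg (by positivity), ← Real.sqrt_eq_rpow,
    div_eq_mul_inv]

end AuxOneDim

section AuxMatrix

lemma mulVec_dot_s9 {n k : ℕ} (U : Matrix (Fin n) (Fin k) ℝ) (hU : Uᵀ * U = 1)
    (v w : Fin k → ℝ) : U.mulVec v ⬝ᵥ U.mulVec w = v ⬝ᵥ w := by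
  rw [Matrix.dotProduct_mulVec, ← Matrix.vecMul_transpose, Matrix.vecMul_vecMul]
  rw [hU, Matrix.vecMul_one]

noncomputable def ι {k : ℕ} : (Fin k → ℝ) → EuclideanSpace ℝ (Fin k) :=
  (WithLp.equiv 2 (Fin k → ℝ)).symm

lemma norm_sq_eucl {k : ℕ} (u : EuclideanSpace ℝ (Fin k)) :
    ‖u‖ ^ 2 = (fun i => u i) ⬝ᵥ (fun i => u i) := by
  rw [EuclideanSpace.norm_eq, Real.sq_sqrt (by positivity)]
  simp [dotProduct, Real.norm_eq_abs, sq_abs, pow_two]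

noncomputable def matIso {k : ℕ} (V : Matrix (Fin k) (Fin k) ℝ)
    (hV₁ : Vᵀ * V = 1) (hV₂ : V * Vᵀ = 1) :
    EuclideanSpace ℝ (Fin k) ≃ₗᵢ[ℝ] EuclideanSpace ℝ (Fin k) where
  toLinearEquiv :=
    { toFun := fun x => ι (V.mulVec x)
      map_add' := fun x y => congrArg ι (Matrix.mulVec_add V x y)
      map_smul' := fun c x => congrArg ι (Matrix.mulVec_smul V c x)
      invFun := fun x => ι (Vᵀ.mulVec x)
      left_inv := fun x => by
        show ι (Vᵀ.mulVec (V.mulVec x)) = x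
        congr 1
        rw [Matrix.mulVec_mulVec, hV₁, Matrix.one_mulVec]
      right_inv := fun x => by
        show ι (V.mulVec (Vᵀ.mulVec x)) = x
        congr 1
        rw [Matrix.mulVec_mulVec, hV₂, Matrix.one_mulVec] }
  norm_map' := fun x => by
    show ‖ι (V.mulVec x)‖ = ‖x‖
    have h : ‖ι (V.mulVec x)‖ ^ 2 = ‖x‖ ^ 2 := by
      rw [norm_sq_eucl (ι (V.mulVec x)), norm_sq_eucl x]
      exact mulVec_dot_s9 V hV₁ x x
    have h2 := congrArg Real.sqrt h
    rwa [Real.sqrt_sq (norm_nonneg _), Real.sqrt_sq (norm_nonneg _)] at h2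

lemma change_var {k : ℕ} (V : Matrix (Fin k) (Fin k) ℝ) (hV₁ : Vᵀ * V = 1) (hV₂ : V * Vᵀ = 1)
    (F : EuclideanSpace ℝ (Fin k) → ℝ) :
    ∫ β : EuclideanSpace ℝ (Fin k), F β
      = ∫ α : Fin k → ℝ, F ((EuclideanSpace.equiv (Fin k) ℝ).symm (V.mulVec α)) := by
  have h1 : MeasurePreserving (matIso V hV₁ hV₂) volume volume :=
    (matIso V hV₁ hV₂).measurePreserving
  have h2 := (EuclideanSpace.volume_preserving_symm_measurableEquiv_toLp (Fin k)).symm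
  let e : (Fin k → ℝ) ≃ᵐ EuclideanSpace ℝ (Fin k) :=
    (MeasurableEquiv.toLp 2 (Fin k → ℝ)).trans
      (matIso V hV₁ hV₂).toHomeomorph.toMeasurableEquiv
  have h3 : MeasurePreserving e volume volume := h1.comp h2
  exact (h3.integral_comp' F).symm

end AuxMatrix


noncomputable def ff {k : ℕ} (a₂ a₁ m : Fin k → ℝ) (p q l : Fin k) (t : ℝ) : ℝ :=
  (if l = p then t - m p else 1)
    * ((if l = q then t - m q else 1) * Real.exp (-(a₂ l) * t ^ 2 + a₁ l * t))

/-- conditional form of eqs. (1010), (1020): entrywise,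
`∫_{ℝᵏ} (β − μ)(β − μ)ᵀ q(σ₁,σ₂,β) dβ = q̃(σ₁,σ₂) · V Λ Vᵀ`,
where `μ = V m`, `mᵢ = a₁ᵢ/(2a₂ᵢ)`, and `Λ = diag((2a₂ᵢ)⁻¹)`. -/
theorem stmt9
    (n k : ℕ) (hn : 0 < n) (hk : 0 < k)
    (X U : Matrix (Fin n) (Fin k) ℝ)
    (V : Matrix (Fin k) (Fin k) ℝ)
    (lam : Fin k → ℝ)
    (hU : Uᵀ * U = 1)
    (hV₁ : Vᵀ * V = 1) (hV₂ : V * Vᵀ = 1)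
    (hX : X = U * Matrix.diagonal lam * Vᵀ)
    (y : EuclideanSpace ℝ (Fin n)) (γ : ℝ)
    (σ₁ σ₂ : ℝ) (hσ₁ : 0 < σ₁) (hσ₂ : 0 < σ₂)
    (w : Fin k → ℝ)
    (hw : w = Vᵀ.mulVec (Xᵀ.mulVec y))
    (a₂ a₁ : Fin k → ℝ) (a₀ : ℝ)
    (ha₂ : ∀ i, a₂ i = lam i ^ 2 / (2 * σ₂ ^ 2) + 1 / (2 * σ₁ ^ 2))
    (ha₁ : ∀ i, a₁ i = w i / σ₂ ^ 2)
    (ha₀ : a₀ = -(y ⬝ᵥ y) / (2 * σ₂ ^ 2))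
    (m : Fin k → ℝ)
    (hm : ∀ i, m i = a₁ i / (2 * a₂ i))
    (μ : Fin k → ℝ)
    (hμ : μ = V.mulVec m)
    (Λ : Matrix (Fin k) (Fin k) ℝ)
    (hΛ : Λ = Matrix.diagonal fun i => (2 * a₂ i)⁻¹) :
    ∀ i j : Fin k,
      (∫ β : EuclideanSpace ℝ (Fin k),
          ((β i - μ i) * (β j - μ j)) *
            (σ₁ ^ (-((k : ℤ) + 1)) * σ₂ ^ (-(n : ℤ)) *
              Real.exp (-γ * Real.log σ₁ ^ 2 - σ₂ ^ 2 / 2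
                - ‖(EuclideanSpace.equiv (Fin n) ℝ).symm (X.mulVec β) - y‖ ^ 2 / (2 * σ₂ ^ 2)
                - ‖β‖ ^ 2 / (2 * σ₁ ^ 2))))
        = (σ₁ ^ (-((k : ℤ) + 1)) * σ₂ ^ (-(n : ℤ)) *
            Real.exp (-γ * Real.log σ₁ ^ 2 - σ₂ ^ 2 / 2 + a₀ + ∑ l, a₁ l ^ 2 / (4 * a₂ l)) *
            (2 * Real.pi) ^ ((k : ℝ) / 2) *
            ∏ l, (2 * a₂ l) ^ (-(1 / 2 : ℝ))) * (V * Λ * Vᵀ) i j := by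
  intro i j
  have hσ₁' : σ₁ ≠ 0 := ne_of_gt hσ₁
  have hσ₂' : σ₂ ≠ 0 := ne_of_gt hσ₂
  have ha₂pos : ∀ p, 0 < a₂ p := by
    intro p; rw [ha₂ p]; positivity
  set c : ℝ := σ₁ ^ (-((k : ℤ) + 1)) * σ₂ ^ (-(n : ℤ)) with hc
  set A : ℝ := -γ * Real.log σ₁ ^ 2 - σ₂ ^ 2 / 2 with hA
  -- matrix / norm facts
  have hXV : ∀ α : Fin k → ℝ, X.mulVec (V.mulVec α) = U.mulVec (fun p => lam p * α p) := by
    intro α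
    have hD : Matrix.diagonal lam *ᵥ α = fun p => lam p * α p := by
      funext p; simp [Matrix.mulVec_diagonal]
    rw [Matrix.mulVec_mulVec, hX, Matrix.mul_assoc (U * Matrix.diagonal lam) Vᵀ V, hV₁,
      Matrix.mul_one, ← Matrix.mulVec_mulVec, hD]
  have hw' : w = fun p => lam p * Uᵀ.mulVec y p := by
    rw [hw, hX, Matrix.mulVec_mulVec, Matrix.transpose_mul, Matrix.transpose_mul,
      Matrix.transpose_transpose, Matrix.diagonal_transpose, ← Matrix.mul_assoc, hV₁,
      Matrix.one_mul, ← Matrix.mulVec_mulVec]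
    have hD : Matrix.diagonal lam *ᵥ (Uᵀ *ᵥ y) = fun p => lam p * Uᵀ.mulVec y p := by
      funext p; simp [Matrix.mulVec_diagonal]
    rw [hD]
  have hdotU : ∀ v w' : Fin k → ℝ, U.mulVec v ⬝ᵥ U.mulVec w' = v ⬝ᵥ w' := mulVec_dot_s9 U hU
  have huy : ∀ α : Fin k → ℝ,
      U.mulVec (fun p => lam p * α p) ⬝ᵥ (fun i' => y i') = ∑ p, w p * α p := by
    intro α
    rw [dotProduct_comm, Matrix.dotProduct_mulVec, ← Matrix.mulVec_transpose]
    rw [hw']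
    refine Finset.sum_congr rfl fun p _ => ?_
    ring
  have hexp : ∀ α : Fin k → ℝ,
      A - ‖ι (X.mulVec (V.mulVec α)) - y‖ ^ 2 / (2 * σ₂ ^ 2)
        - ‖ι (V.mulVec α)‖ ^ 2 / (2 * σ₁ ^ 2)
      = A + a₀ + ∑ l, (-(a₂ l) * α l ^ 2 + a₁ l * α l) := by
    intro α
    have hnorm1 : ‖ι (X.mulVec (V.mulVec α)) - y‖ ^ 2
        = ((∑ p, lam p * α p * (lam p * α p)) - (∑ p, w p * α p))
          - ((∑ p, w p * α p) - y ⬝ᵥ y) := by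
      rw [norm_sq_eucl]
      have hz : (fun i' => (ι (X.mulVec (V.mulVec α)) - y) i')
          = (U.mulVec (fun p => lam p * α p)) - (fun i' => y i') := by
        funext i'
        show X.mulVec (V.mulVec α) i' - y i' = _
        rw [hXV α]
        rfl
      rw [hz, sub_dotProduct, dotProduct_sub, dotProduct_sub]
      rw [hdotU]
      rw [huy α]
      have hyu : (fun i' => y i') ⬝ᵥ U.mulVec (fun p => lam p * α p) = ∑ p, w p * α p := by
        rw [dotProduct_comm]
        exact huy α
      rw [hyu]
      rfl
    have hnorm2 : ‖ι (V.mulVec α)‖ ^ 2 = ∑ p, α p * α p := by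
      rw [norm_sq_eucl]
      show V.mulVec α ⬝ᵥ V.mulVec α = ∑ p, α p * α p
      rw [mulVec_dot_s9 V hV₁]
      rfl
    rw [hnorm1, hnorm2, ha₀]
    have hsum : ∑ l, (-(a₂ l) * α l ^ 2 + a₁ l * α l)
        = (∑ l, -(lam l * α l * (lam l * α l)) / (2 * σ₂ ^ 2))
          + ((∑ l, -(α l * α l) / (2 * σ₁ ^ 2)) + ∑ l, w l * α l / σ₂ ^ 2) := by
      rw [← Finset.sum_add_distrib, ← Finset.sum_add_distrib]
      refine Finset.sum_congr rfl fun l _ => ?_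
      rw [ha₂ l, ha₁ l]
      field_simp
      ring
    rw [hsum, ← Finset.sum_div, ← Finset.sum_div, ← Finset.sum_div,
      Finset.sum_neg_distrib, Finset.sum_neg_distrib]
    field_simp
    ring
  have hfac : ∀ (r : Fin k) (α : Fin k → ℝ),
      V.mulVec α r - μ r = ∑ p, V r p * (α p - m p) := by
    intro r α
    have e1 : V.mulVec α r = ∑ p, V r p * α p := rfl
    have e2 : μ r = ∑ p, V r p * m p := by rw [hμ]; rfl
    rw [e1, e2, ← Finset.sum_sub_distrib]
    exact Finset.sum_congr rfl fun p _ => (mul_sub _ _ _).symm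
  have hprodff : ∀ (p q : Fin k) (α : Fin k → ℝ),
      (∏ l, ff a₂ a₁ m p q l (α l))
        = (α p - m p) * ((α q - m q) * ∏ l, Real.exp (-(a₂ l) * α l ^ 2 + a₁ l * α l)) := by
    intro p q α
    simp only [ff, Finset.prod_mul_distrib, Finset.prod_ite_eq', Finset.mem_univ, if_true]
  have hpt : ∀ α : Fin k → ℝ,
      ((V.mulVec α i - μ i) * (V.mulVec α j - μ j)) *
        (c * Real.exp (A - ‖ι (X.mulVec (V.mulVec α)) - y‖ ^ 2 / (2 * σ₂ ^ 2)
            - ‖ι (V.mulVec α)‖ ^ 2 / (2 * σ₁ ^ 2)))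
      = ∑ p, ∑ q, (c * Real.exp A * Real.exp a₀ * (V i p * V j q))
          * ∏ l, ff a₂ a₁ m p q l (α l) := by
    intro α
    rw [hexp α, hfac i α, hfac j α, Real.exp_add, Real.exp_add, Real.exp_sum]
    simp only [hprodff]
    rw [Finset.sum_mul_sum]
    rw [Finset.sum_mul]
    refine Finset.sum_congr rfl fun p _ => ?_
    rw [Finset.sum_mul]
    refine Finset.sum_congr rfl fun q _ => ?_
    ring
  -- integrability
  have hInt1 : ∀ p q l, Integrable (fun t => ff a₂ a₁ m p q l t) := by
    intro p q l
    simp only [ff]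
    rcases eq_or_ne l p with hp | hp
    · subst hp
      rcases eq_or_ne l q with hq | hq
      · subst hq
        simp only [eq_self_iff_true, if_true]
        exact integrable_g2 (a₂ l) (a₁ l) (m l) (m l) (ha₂pos l)
      · simp only [eq_self_iff_true, if_true, if_neg hq, one_mul]
        exact integrable_g1 (a₂ l) (a₁ l) (m l) (ha₂pos l)
    · rcases eq_or_ne l q with hq | hq
      · subst hq
        simp only [eq_self_iff_true, if_true, if_neg hp, one_mul]
        exact integrable_g1 (a₂ l) (a₁ l) (m l) (ha₂pos l)
      · simp only [if_neg hp, if_neg hq, one_mul]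
        exact integrable_g (a₂ l) (a₁ l) (ha₂pos l)
  have hIntProd : ∀ p q, Integrable (fun α : Fin k → ℝ => ∏ l, ff a₂ a₁ m p q l (α l)) :=
    fun p q => Integrable.fintype_prod (f := fun l => ff a₂ a₁ m p q l) (fun l => hInt1 p q l)
  -- change of variables and computation
  rw [change_var V hV₁ hV₂]
  show (∫ α : Fin k → ℝ,
      ((V.mulVec α i - μ i) * (V.mulVec α j - μ j)) *
        (c * Real.exp (A - ‖ι (X.mulVec (V.mulVec α)) - y‖ ^ 2 / (2 * σ₂ ^ 2)
            - ‖ι (V.mulVec α)‖ ^ 2 / (2 * σ₁ ^ 2)))) = _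
  rw [integral_congr_ae (ae_of_all _ hpt)]
  rw [integral_finset_sum _ (fun p _ => integrable_finset_sum _
    (fun q _ => (hIntProd p q).const_mul _))]
  have hstep : ∀ p : Fin k,
      (∫ α : Fin k → ℝ, ∑ q, (c * Real.exp A * Real.exp a₀ * (V i p * V j q))
          * ∏ l, ff a₂ a₁ m p q l (α l))
        = (c * Real.exp A * Real.exp a₀ * (V i p * V j p))
          * ((2 * a₂ p)⁻¹
            * ∏ l, (Real.exp (a₁ l ^ 2 / (4 * a₂ l)) * Real.sqrt (Real.pi / a₂ l))) := by
    intro p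
    rw [integral_finset_sum _ (fun q _ => (hIntProd p q).const_mul _)]
    have hterm : ∀ q : Fin k,
        (∫ α : Fin k → ℝ, (c * Real.exp A * Real.exp a₀ * (V i p * V j q))
            * ∏ l, ff a₂ a₁ m p q l (α l))
          = (c * Real.exp A * Real.exp a₀ * (V i p * V j q))
            * ∏ l, ∫ t : ℝ, ff a₂ a₁ m p q l t := by
      intro q
      rw [integral_const_mul, integral_fintype_prod_volume_eq_prod (ι := Fin k) (ff a₂ a₁ m p q)]
    rw [Finset.sum_congr rfl fun q _ => hterm q]
    rw [Finset.sum_eq_single_of_mem p (Finset.mem_univ p) ?_]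
    · have hev : ∀ l : Fin k, (∫ t : ℝ, ff a₂ a₁ m p p l t)
          = (if l = p then (2 * a₂ p)⁻¹ else 1)
            * (Real.exp (a₁ l ^ 2 / (4 * a₂ l)) * Real.sqrt (Real.pi / a₂ l)) := by
        intro l
        rcases eq_or_ne l p with h | h
        · subst h
          simp only [ff, eq_self_iff_true, if_true]
          rw [show m l = a₁ l / (2 * a₂ l) from hm l]
          rw [int_g2 (a₂ l) (a₁ l) (ha₂pos l)]
        · simp only [ff, if_neg h, one_mul]
          exact int_g (a₂ l) (a₁ l) (ha₂pos l)
      rw [Finset.prod_congr rfl fun l _ => hev l, Finset.prod_mul_distrib,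
        Finset.prod_ite_eq', if_pos (Finset.mem_univ p)]
    · intro q _ hqp
      have h0 : (∫ t : ℝ, ff a₂ a₁ m p q p t) = 0 := by
        simp only [ff, eq_self_iff_true, if_true,
          if_neg (show p ≠ q from fun h => hqp h.symm), one_mul]
        rw [show m p = a₁ p / (2 * a₂ p) from hm p]
        exact int_g1 (a₂ p) (a₁ p) (ha₂pos p)
      rw [Finset.prod_eq_zero (Finset.mem_univ p) h0, mul_zero]
  rw [Finset.sum_congr rfl fun p _ => hstep p]
  -- final algebra
  have hVΛ : (V * Λ * Vᵀ) i j = ∑ p, V i p * (2 * a₂ p)⁻¹ * V j p := by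
    rw [hΛ, Matrix.mul_apply]
    refine Finset.sum_congr rfl fun p _ => ?_
    rw [Matrix.mul_diagonal, Matrix.transpose_apply]
  have hprodG : (∏ l, (Real.exp (a₁ l ^ 2 / (4 * a₂ l)) * Real.sqrt (Real.pi / a₂ l)))
      = Real.exp (∑ l, a₁ l ^ 2 / (4 * a₂ l))
        * ((2 * Real.pi) ^ ((k : ℝ) / 2) * ∏ l, (2 * a₂ l) ^ (-(1 / 2 : ℝ))) := by
    rw [Finset.prod_mul_distrib, ← Real.exp_sum]
    congr 1
    rw [Finset.prod_congr rfl fun l _ => sqrt_pi_div (a₂ l) (ha₂pos l),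
      Finset.prod_mul_distrib, Finset.prod_const, Finset.card_univ, Fintype.card_fin]
    congr 1
    rw [Real.sqrt_eq_rpow, ← Real.rpow_natCast ((2 * Real.pi) ^ ((1:ℝ)/2)) k,
      ← Real.rpow_mul (by positivity)]
    congr 1
    ring
  rw [hVΛ, hprodG, Finset.mul_sum]
  refine Finset.sum_congr rfl fun p _ => ?_
  rw [Real.exp_add, Real.exp_add]
  ring
end
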